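/- arXiv:2111.01313 — 12 statements merged into one kernel-verified Lean document; each statement's English description precedes it below -/
import Mathlib

section
/- Let β₁, β₂, β₃ be roots in a crystallographic root system such that β₁ + β₂ + β₃ is a root and β_i + β_j ≠ 0 for each distinct pair i, j. Then at least two of the three sums β₁ + β₂, β₁ + β₃, β₂ + β₃ are also roots. -/
/-- Key lemma: if `β₁ + β₃` and `β₂ + β₃` are both not roots, we get a contradiction. -/
theorem key_two_nonroots_false {V : Type*} [NormedAddCommGroup V]
    [InnerProductSpace ℝ V]
    (Rt : Set V) (h0 : (0 : V) ∉ Rt)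
    (hneg : ∀ β ∈ Rt, -β ∈ Rt)
    (hcrys : ∀ β ∈ Rt, ∀ γ ∈ Rt, 0 < (inner ℝ β γ : ℝ) → β - γ ∈ Rt ∨ β - γ = 0)
    (β₁ β₂ β₃ : V) (hβ₁ : β₁ ∈ Rt) (hβ₂ : β₂ ∈ Rt) (hβ₃ : β₃ ∈ Rt)
    (hsum : β₁ + β₂ + β₃ ∈ Rt)
    (h12 : β₁ + β₂ ≠ 0) (h13 : β₁ + β₃ ≠ 0) (h23 : β₂ + β₃ ≠ 0)
    (hA : β₁ + β₃ ∉ Rt) (hB : β₂ + β₃ ∉ Rt) : False := by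
  have hβ₁0 : β₁ ≠ 0 := fun h => h0 (h ▸ hβ₁)
  -- (β₁, β₃) ≥ 0
  have h1 : (0:ℝ) ≤ inner ℝ β₁ β₃ := by
    by_contra h
    push_neg at h
    have hpos : (0:ℝ) < inner ℝ β₁ (-β₃) := by
      rw [inner_neg_right]; linarith
    rcases hcrys β₁ hβ₁ (-β₃) (hneg β₃ hβ₃) hpos with hm | hz
    · exact hA (by simpa [sub_neg_eq_add] using hm)
    · exact h13 (by simpa [sub_neg_eq_add] using hz)
  -- (β₂, β₃) ≥ 0
  have h2 : (0:ℝ) ≤ inner ℝ β₂ β₃ := by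
    by_contra h
    push_neg at h
    have hpos : (0:ℝ) < inner ℝ β₂ (-β₃) := by
      rw [inner_neg_right]; linarith
    rcases hcrys β₂ hβ₂ (-β₃) (hneg β₃ hβ₃) hpos with hm | hz
    · exact hB (by simpa [sub_neg_eq_add] using hm)
    · exact h23 (by simpa [sub_neg_eq_add] using hz)
  -- (δ, β₁) ≤ 0
  have h3 : (inner ℝ (β₁ + β₂ + β₃) β₁ : ℝ) ≤ 0 := by
    by_contra h
    push_neg at h
    rcases hcrys _ hsum β₁ hβ₁ h with hm | hz
    · exact hB (by rw [show β₁ + β₂ + β₃ - β₁ = β₂ + β₃ by abel] at hm; exact hm)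
    · exact h23 (by rw [show β₁ + β₂ + β₃ - β₁ = β₂ + β₃ by abel] at hz; exact hz)
  -- (δ, β₂) ≤ 0
  have h4 : (inner ℝ (β₁ + β₂ + β₃) β₂ : ℝ) ≤ 0 := by
    by_contra h
    push_neg at h
    rcases hcrys _ hsum β₂ hβ₂ h with hm | hz
    · exact hA (by rw [show β₁ + β₂ + β₃ - β₂ = β₁ + β₃ by abel] at hm; exact hm)
    · exact h13 (by rw [show β₁ + β₂ + β₃ - β₂ = β₁ + β₃ by abel] at hz; exact hz)
  -- expand
  have e3 : (inner ℝ (β₁ + β₂ + β₃) β₁ : ℝ)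
      = inner ℝ β₁ β₁ + inner ℝ β₁ β₂ + inner ℝ β₁ β₃ := by
    simp [inner_add_left, real_inner_comm β₂ β₁, real_inner_comm β₃ β₁]
  have e4 : (inner ℝ (β₁ + β₂ + β₃) β₂ : ℝ)
      = inner ℝ β₁ β₂ + inner ℝ β₂ β₂ + inner ℝ β₂ β₃ := by
    simp [inner_add_left, real_inner_comm β₃ β₂]
  have hn1 : (0:ℝ) < inner ℝ β₁ β₁ := by
    rw [real_inner_self_eq_norm_sq]
    exact pow_pos (norm_pos_iff.mpr hβ₁0) 2
  -- (β₁, β₂) < 0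
  have h5 : (inner ℝ β₁ β₂ : ℝ) < 0 := by
    rw [e3] at h3; linarith
  -- β₁ + β₂ ∈ Rt
  have hγ : β₁ + β₂ ∈ Rt := by
    have hpos : (0:ℝ) < inner ℝ β₁ (-β₂) := by rw [inner_neg_right]; linarith
    rcases hcrys β₁ hβ₁ (-β₂) (hneg β₂ hβ₂) hpos with hm | hz
    · simpa [sub_neg_eq_add] using hm
    · exact absurd (by simpa [sub_neg_eq_add] using hz) h12
  have hγ0 : β₁ + β₂ ≠ 0 := h12
  have hnγ : (0:ℝ) < inner ℝ (β₁ + β₂) (β₁ + β₂) := by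
    rw [real_inner_self_eq_norm_sq]
    exact pow_pos (norm_pos_iff.mpr hγ0) 2
  have eγ : (inner ℝ (β₁ + β₂) (β₁ + β₂) : ℝ)
      = inner ℝ β₁ β₁ + inner ℝ β₁ β₂ + inner ℝ β₁ β₂ + inner ℝ β₂ β₂ := by
    simp only [inner_add_left, inner_add_right, real_inner_comm β₂ β₁]
    ring
  rw [e3] at h3; rw [e4] at h4; rw [eγ] at hnγ
  linarith

/-- If `β₁, β₂, β₃` are roots of a crystallographic root system with
`β₁ + β₂ + β₃` a root and `βᵢ + βⱼ ≠ 0` for all distinct pairs, then at least two of the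
three pairwise sums are roots. -/
theorem two_of_three_pairwise_sums_are_roots {V : Type*} [NormedAddCommGroup V]
    [InnerProductSpace ℝ V]
    (Rt : Set V) (h0 : (0 : V) ∉ Rt)
    (hneg : ∀ β ∈ Rt, -β ∈ Rt)
    (hcrys : ∀ β ∈ Rt, ∀ γ ∈ Rt, 0 < (inner ℝ β γ : ℝ) → β - γ ∈ Rt ∨ β - γ = 0)
    (β₁ β₂ β₃ : V) (hβ₁ : β₁ ∈ Rt) (hβ₂ : β₂ ∈ Rt) (hβ₃ : β₃ ∈ Rt)
    (hsum : β₁ + β₂ + β₃ ∈ Rt)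
    (h12 : β₁ + β₂ ≠ 0) (h13 : β₁ + β₃ ≠ 0) (h23 : β₂ + β₃ ≠ 0) :
    (β₁ + β₂ ∈ Rt ∧ β₁ + β₃ ∈ Rt) ∨ (β₁ + β₂ ∈ Rt ∧ β₂ + β₃ ∈ Rt) ∨
      (β₁ + β₃ ∈ Rt ∧ β₂ + β₃ ∈ Rt) := by
  by_cases hA : β₁ + β₂ ∈ Rt
  · by_cases hB : β₁ + β₃ ∈ Rt
    · exact Or.inl ⟨hA, hB⟩
    · by_cases hC : β₂ + β₃ ∈ Rt
      · exact Or.inr (Or.inl ⟨hA, hC⟩)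
      · -- both β₁+β₃ and β₂+β₃ not roots: contradiction (common element β₃)
        exact absurd (key_two_nonroots_false Rt h0 hneg hcrys β₁ β₂ β₃ hβ₁ hβ₂ hβ₃
          hsum h12 h13 h23 hB hC) not_false
  · by_cases hB : β₁ + β₃ ∈ Rt
    · by_cases hC : β₂ + β₃ ∈ Rt
      · exact Or.inr (Or.inr ⟨hB, hC⟩)
      · -- β₁+β₂ and β₂+β₃ not roots: common element β₂, use (β₁, β₃, β₂)
        refine absurd (key_two_nonroots_false Rt h0 hneg hcrys β₁ β₃ β₂ hβ₁ hβ₃ hβ₂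
          (by rwa [show β₁ + β₃ + β₂ = β₁ + β₂ + β₃ by abel])
          h13 h12 (by rwa [add_comm])
          hA (by rwa [add_comm])) not_false
    · -- β₁+β₂ and β₁+β₃ not roots: common element β₁, use (β₂, β₃, β₁)
      refine absurd (key_two_nonroots_false Rt h0 hneg hcrys β₂ β₃ β₁ hβ₂ hβ₃ hβ₁
        (by rwa [show β₂ + β₃ + β₁ = β₁ + β₂ + β₃ by abel]) h23
        (by rwa [add_comm]) (by rwa [add_comm])
        (by rwa [add_comm]) (by rwa [add_comm])) not_false
end

section
/- Let β₁, …, β_m be roots in a crystallographic root system whose total sum γ = ∑_{i=1}^m β_i is a root. Then after reordering and possibly deleting some of the β_i, one obtains a sequence (β_{i₁}, …, β_{i_{m'}}) such that every partial sum ∑_{j=1}^k β_{i_j} (for 1 ≤ k ≤ m') is a root and the total sum equals γ. Moreover, if all β_i are positive (for a fixed choice of positive roots), then no deletions are needed, i.e., the sequence is a reordering of all the β_i. -/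
/-- A summing sequence: every nonempty initial partial sum of the list is a root. -/
def IsSummingSeq {V : Type*} [AddCommGroup V] (Rt : Set V) (l : List V) : Prop :=
  ∀ k, 1 ≤ k → k ≤ l.length → (l.take k).sum ∈ Rt

private lemma exists_pos_inner {V : Type*} [NormedAddCommGroup V] [InnerProductSpace ℝ V]
    (γ : V) : ∀ L : List V, 0 < (inner ℝ L.sum γ : ℝ) → ∃ x ∈ L, 0 < (inner ℝ x γ : ℝ) := by
  intro L
  induction L with
  | nil => simp
  | cons a l ih =>
    intro h
    rw [List.sum_cons, inner_add_left] at h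
    rcases lt_or_ge 0 (inner ℝ a γ : ℝ) with h1 | h1
    · exact ⟨a, .head _, h1⟩
    · obtain ⟨x, hx, hx'⟩ := ih (by linarith)
      exact ⟨x, .tail _ hx, hx'⟩

private lemma summing_append {V : Type*} [AddCommGroup V] (Rt : Set V) {l : List V} {x : V}
    (hl : IsSummingSeq Rt l) (hx : l.sum + x ∈ Rt) : IsSummingSeq Rt (l ++ [x]) := by
  intro k hk1 hk2
  rcases le_or_gt k l.length with h | h
  · rw [List.take_append_of_le_length h]
    exact hl k hk1 h
  · have hk : l.length + 1 ≤ k := h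
    have : (l ++ [x]).length ≤ k := by simpa using hk
    rw [List.take_of_length_le this]
    simpa using hx

private lemma keyA {V : Type*} [NormedAddCommGroup V] [InnerProductSpace ℝ V]
    (Rt : Set V) (h0 : (0 : V) ∉ Rt)
    (hcrys : ∀ β ∈ Rt, ∀ γ ∈ Rt, 0 < (inner ℝ β γ : ℝ) → β - γ ∈ Rt ∨ β - γ = 0) :
    ∀ n (L : List V), L.length ≤ n → (∀ x ∈ L, x ∈ Rt) → L.sum ∈ Rt →
      ∃ l : List V, l.Subperm L ∧ IsSummingSeq Rt l ∧ l.sum = L.sum := by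
  intro n
  induction n with
  | zero =>
    intro L hL _ hsum
    rw [List.length_eq_zero_iff.mp (Nat.le_zero.mp hL)] at hsum
    simp at hsum; exact absurd hsum h0
  | succ n ih =>
    intro L hL hmem hsum
    classical
    set γ := L.sum with hγ
    have hγ0 : γ ≠ 0 := fun h => h0 (h ▸ hsum)
    have hpos : 0 < (inner ℝ γ γ : ℝ) :=
      lt_of_le_of_ne real_inner_self_nonneg
        (Ne.symm fun h => hγ0 ((inner_self_eq_zero (𝕜 := ℝ)).mp h))
    obtain ⟨x, hxL, hx⟩ := exists_pos_inner γ L hpos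
    have hperm : L.Perm (x :: L.erase x) := List.perm_cons_erase hxL
    have hsum' : x + (L.erase x).sum = γ := by
      rw [hγ, hperm.sum_eq, List.sum_cons]
    rcases hcrys γ hsum x (hmem x hxL) (by rwa [real_inner_comm]) with hr | hr
    · have hes : (L.erase x).sum = γ - x := by rw [← hsum']; abel
      have hlen : (L.erase x).length ≤ n := by
        have := hperm.length_eq
        simp at this; omega
      obtain ⟨l, hl1, hl2, hl3⟩ := ih (L.erase x) hlen
        (fun y hy => hmem y (List.mem_of_mem_erase hy)) (hes ▸ hr)
      refine ⟨l ++ [x], ?_, summing_append Rt hl2 (by rw [hl3, hes]; simpa using hsum), ?_⟩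
      · have : (l ++ [x]).Perm (x :: l) := by
          simpa using (List.perm_append_comm (l₁ := l) (l₂ := [x]))
        exact (this.subperm.trans ((List.subperm_cons x).mpr hl1)).trans hperm.symm.subperm
      · rw [List.sum_append, hl3, hes]; simp
    · have hxγ : x = γ := (sub_eq_zero.mp hr).symm
      refine ⟨[x], ?_, ?_, by simpa using hxγ⟩
      · exact List.singleton_subperm_iff.mpr hxL
      · intro k hk1 hk2
        simp at hk2
        interval_cases k
        simpa using hmem x hxL

private lemma keyB {V : Type*} [NormedAddCommGroup V] [InnerProductSpace ℝ V]
    (Rt : Set V) (h0 : (0 : V) ∉ Rt)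
    (hcrys : ∀ β ∈ Rt, ∀ γ ∈ Rt, 0 < (inner ℝ β γ : ℝ) → β - γ ∈ Rt ∨ β - γ = 0)
    (f : V →ₗ[ℝ] ℝ) :
    ∀ n (L : List V), L.length ≤ n → (∀ x ∈ L, x ∈ Rt) → (∀ x ∈ L, 0 < f x) → L.sum ∈ Rt →
      ∃ l : List V, l.Perm L ∧ IsSummingSeq Rt l := by
  intro n
  induction n with
  | zero =>
    intro L hL _ _ hsum
    rw [List.length_eq_zero_iff.mp (Nat.le_zero.mp hL)] at hsum
    simp at hsum; exact absurd hsum h0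
  | succ n ih =>
    intro L hL hmem hposf hsum
    classical
    set γ := L.sum with hγ
    have hγ0 : γ ≠ 0 := fun h => h0 (h ▸ hsum)
    have hpos : 0 < (inner ℝ γ γ : ℝ) :=
      lt_of_le_of_ne real_inner_self_nonneg
        (Ne.symm fun h => hγ0 ((inner_self_eq_zero (𝕜 := ℝ)).mp h))
    obtain ⟨x, hxL, hx⟩ := exists_pos_inner γ L hpos
    have hperm : L.Perm (x :: L.erase x) := List.perm_cons_erase hxL
    have hsum' : x + (L.erase x).sum = γ := by
      rw [hγ, hperm.sum_eq, List.sum_cons]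
    have hes : (L.erase x).sum = γ - x := by rw [← hsum']; abel
    rcases hcrys γ hsum x (hmem x hxL) (by rwa [real_inner_comm]) with hr | hr
    · have hlen : (L.erase x).length ≤ n := by
        have := hperm.length_eq
        simp at this; omega
      obtain ⟨l, hl1, hl2⟩ := ih (L.erase x) hlen
        (fun y hy => hmem y (List.mem_of_mem_erase hy))
        (fun y hy => hposf y (List.mem_of_mem_erase hy)) (hes ▸ hr)
      refine ⟨l ++ [x], ?_, summing_append Rt hl2 (by rw [hl1.sum_eq, hes]; simpa using hsum)⟩
      have : (l ++ [x]).Perm (x :: l) := by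
        simpa using (List.perm_append_comm (l₁ := l) (l₂ := [x]))
      exact (this.trans (hl1.cons x)).trans hperm.symm
    · have hes0 : (L.erase x).sum = 0 := by
        rw [hes, sub_eq_zero.mp hr]; simp [sub_eq_zero.mp hr]
      have hnil : L.erase x = [] := by
        by_contra hne
        have hmapne : (L.erase x).map f ≠ [] := by simpa using hne
        have hpos' : 0 < ((L.erase x).map f).sum := by
          apply List.sum_pos
          · intro y hy
            obtain ⟨z, hz, rfl⟩ := List.mem_map.mp hy
            exact hposf z (List.mem_of_mem_erase hz)
          · exact hmapne
        rw [← map_list_sum f, hes0] at hpos'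
        simp at hpos'
      refine ⟨[x], by rw [hnil] at hperm; exact hperm.symm, ?_⟩
      intro k hk1 hk2
      simp at hk2
      interval_cases k
      simpa using hmem x hxL

/-- From roots `β₁, …, β_m` of a crystallographic root system whose total sum is
a root, one obtains by reordering and deleting a summing sequence with the same total sum;
if all the `β i` are positive, the sequence is in fact a reordering (no deletions needed). -/
theorem exists_summing_sequence {V : Type*} [NormedAddCommGroup V] [InnerProductSpace ℝ V]
    (Rt : Set V) (h0 : (0 : V) ∉ Rt)
    (hneg : ∀ β ∈ Rt, -β ∈ Rt)
    (hcrys : ∀ β ∈ Rt, ∀ γ ∈ Rt, 0 < (inner ℝ β γ : ℝ) → β - γ ∈ Rt ∨ β - γ = 0)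
    (f : V →ₗ[ℝ] ℝ) (hf : ∀ β ∈ Rt, f β ≠ 0)
    (P : Set V) (hP : P = {β ∈ Rt | 0 < f β})
    (m : ℕ) (β : Fin m → V) (hβ : ∀ i, β i ∈ Rt)
    (hsum : (∑ i, β i) ∈ Rt) :
    (∃ l : List V, l.Subperm (List.ofFn β) ∧ IsSummingSeq Rt l ∧ l.sum = ∑ i, β i) ∧
      ((∀ i, β i ∈ P) →
        ∃ l : List V, l.Perm (List.ofFn β) ∧ IsSummingSeq Rt l) := by
  have hsumL : (List.ofFn β).sum = ∑ i, β i := List.sum_ofFn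
  have hmem : ∀ x ∈ List.ofFn β, x ∈ Rt := by
    intro x hx
    obtain ⟨i, rfl⟩ := List.mem_ofFn.mp hx
    exact hβ i
  constructor
  · obtain ⟨l, h1, h2, h3⟩ := keyA Rt h0 hcrys (List.ofFn β).length (List.ofFn β) le_rfl
      hmem (hsumL ▸ hsum)
    exact ⟨l, h1, h2, by rw [h3, hsumL]⟩
  · intro hPβ
    apply keyB Rt h0 hcrys f (List.ofFn β).length (List.ofFn β) le_rfl hmem
    · intro x hx
      obtain ⟨i, rfl⟩ := List.mem_ofFn.mp hx
      exact (hP ▸ hPβ i).2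
    · exact hsumL ▸ hsum
end

section
/- Let β₁, …, β_m be roots in a crystallographic root system, each lying in a convex subset 𝔑 of the roots, such that ∑_{i=1}^m β_i is a root. Then ∑_{i=1}^m β_i also lies in 𝔑. -/
private lemma list_sum_nonpos {l : List ℝ} (h : ∀ x ∈ l, x ≤ 0) : l.sum ≤ 0 := by
  induction l with
  | nil => simp
  | cons a l ih =>
    simp only [List.sum_cons]
    have := h a (by simp)
    have := ih fun x hx => h x (by simp [hx])
    linarith

private lemma list_sum_nonpos' {l : List ℝ} (h : ∀ x ∈ l, x ≤ 0) : l.sum ≤ 0 := list_sum_nonpos h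

private lemma inner_list_sum' {V : Type*} [NormedAddCommGroup V] [InnerProductSpace ℝ V]
    (S : V) (M : List V) : (inner ℝ S M.sum : ℝ) = (M.map (fun z => (inner ℝ S z : ℝ))).sum := by
  induction M with
  | nil => simp
  | cons a M ihM => simp [inner_add_right, ihM]

private lemma list_sum_mem_of_convex {V : Type*} [NormedAddCommGroup V] [InnerProductSpace ℝ V]
    (Rt : Set V) (h0 : (0 : V) ∉ Rt)
    (hcrys : ∀ β ∈ Rt, ∀ γ ∈ Rt, 0 < (inner ℝ β γ : ℝ) → β - γ ∈ Rt ∨ β - γ = 0)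
    (N : Set V) (hNR : N ⊆ Rt)
    (hconv : ∀ β ∈ N, ∀ γ ∈ N, ∀ c₀ c₁ : ℝ, 0 < c₀ → 0 < c₁ →
      c₀ • β + c₁ • γ ∈ Rt → c₀ • β + c₁ • γ ∈ N) :
    ∀ n : ℕ, ∀ L : List V, L.length = n → (∀ x ∈ L, x ∈ N) → L.sum ∈ Rt → L.sum ∈ N := by
  classical
  intro n
  induction n using Nat.strong_induction_on with
  | _ n ih =>
    intro L hlen hmem hsum
    match L with
    | [] => simp at hsum; exact absurd hsum h0
    | [x] => simpa using hmem x (by simp)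
    | x :: y :: L' =>
      set S := (x :: y :: L').sum with hS
      have hSne : S ≠ 0 := fun h => h0 (h ▸ hsum)
      have hex : ∃ z ∈ (x :: y :: L'), 0 < (inner ℝ S z : ℝ) := by
        by_contra hc
        push_neg at hc
        have hle : ((x :: y :: L').map (fun z => (inner ℝ S z : ℝ))).sum ≤ 0 :=
          list_sum_nonpos (fun a ha => by
            obtain ⟨z, hz, rfl⟩ := List.mem_map.mp ha
            exact hc z hz)
        have heq := inner_list_sum' S (x :: y :: L')
        rw [← hS] at heq
        have hpos : (0:ℝ) < inner ℝ S S := by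
          rw [real_inner_self_eq_norm_sq]
          have : 0 < ‖S‖ := norm_pos_iff.mpr hSne
          positivity
        rw [heq] at hpos
        linarith
      obtain ⟨z, hz, hposz⟩ := hex
      have hzN : z ∈ N := hmem z hz
      rcases hcrys S hsum z (hNR hzN) hposz with hSz | hSz
      · have hperm : List.Perm (x :: y :: L') (z :: (x :: y :: L').erase z) :=
          List.perm_cons_erase hz
        have herase : ((x :: y :: L').erase z).sum = S - z := by
          have h1 : S = z + ((x :: y :: L').erase z).sum := by
            rw [hS, hperm.sum_eq, List.sum_cons]
          rw [h1]; abel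
        have hlenlt : ((x :: y :: L').erase z).length < n := by
          rw [List.length_erase_of_mem hz]
          simp only [List.length_cons] at hlen ⊢
          omega
        have hTN : ((x :: y :: L').erase z).sum ∈ N := by
          apply ih _ hlenlt _ rfl
          · intro w hw; exact hmem w (List.mem_of_mem_erase hw)
          · rw [herase]; exact hSz
        rw [herase] at hTN
        have hkey : (1:ℝ) • z + (1:ℝ) • (S - z) = S := by simp
        have := hconv z hzN (S - z) hTN 1 1 one_pos one_pos (by rw [hkey]; exact hsum)
        rwa [hkey] at this
      · rw [sub_eq_zero.mp hSz]; exact hzN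


/-- If roots `β₁, …, β_m` all lie in a convex subset `N` of a crystallographic
root system and their sum is a root, then the sum also lies in `N`. -/
theorem sum_mem_of_convex {V : Type*} [NormedAddCommGroup V] [InnerProductSpace ℝ V]
    (Rt : Set V) (h0 : (0 : V) ∉ Rt)
    (hneg : ∀ β ∈ Rt, -β ∈ Rt)
    (hcrys : ∀ β ∈ Rt, ∀ γ ∈ Rt, 0 < (inner ℝ β γ : ℝ) → β - γ ∈ Rt ∨ β - γ = 0)
    (N : Set V) (hNR : N ⊆ Rt)
    (hconv : ∀ β ∈ N, ∀ γ ∈ N, ∀ c₀ c₁ : ℝ, 0 < c₀ → 0 < c₁ →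
      c₀ • β + c₁ • γ ∈ Rt → c₀ • β + c₁ • γ ∈ N)
    (m : ℕ) (β : Fin m → V) (hβ : ∀ i, β i ∈ N)
    (hsum : (∑ i, β i) ∈ Rt) :
    (∑ i, β i) ∈ N := by
  have hlist : (∑ i, β i) = (List.ofFn β).sum := by
    rw [List.sum_ofFn]
  rw [hlist] at hsum ⊢
  apply list_sum_mem_of_convex Rt h0 hcrys N hNR hconv (List.ofFn β).length _ rfl _ hsum
  intro x hx
  obtain ⟨i, rfl⟩ := List.mem_ofFn.mp hx
  exact hβ i
end

section
/- Let β₀, β₁, γ₀, γ₁ be elements of a crystallographic root system which are each either a positive root or zero, and such that β₀ + β₁ = γ₀ + γ₁ is a positive root. Then there exist indices i, j ∈ {0,1} such that β_i − γ_j is either a positive root or zero. -/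
/-- If `β₀, β₁, γ₀, γ₁` are each a positive root or zero, and
`β₀ + β₁ = γ₀ + γ₁` is a positive root, then some difference `βᵢ - γⱼ` is a positive root
or zero. -/
theorem root_pairs_equality {V : Type*} [NormedAddCommGroup V] [InnerProductSpace ℝ V]
    (Rt : Set V) (h0 : (0 : V) ∉ Rt)
    (hneg : ∀ β ∈ Rt, -β ∈ Rt)
    (hcrys : ∀ β ∈ Rt, ∀ γ ∈ Rt, 0 < (inner ℝ β γ : ℝ) → β - γ ∈ Rt ∨ β - γ = 0)
    (f : V →ₗ[ℝ] ℝ) (hf : ∀ β ∈ Rt, f β ≠ 0)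
    (P : Set V) (hP : P = {β ∈ Rt | 0 < f β})
    (β₀ β₁ γ₀ γ₁ : V)
    (hβ₀ : β₀ ∈ P ∨ β₀ = 0) (hβ₁ : β₁ ∈ P ∨ β₁ = 0)
    (hγ₀ : γ₀ ∈ P ∨ γ₀ = 0) (hγ₁ : γ₁ ∈ P ∨ γ₁ = 0)
    (heq : β₀ + β₁ = γ₀ + γ₁) (hsum : β₀ + β₁ ∈ P) :
    ∃ b ∈ ({β₀, β₁} : Set V), ∃ g ∈ ({γ₀, γ₁} : Set V), b - g ∈ P ∨ b - g = 0 := by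
  subst hP
  -- dispose of the cases where one of the four vectors is zero
  rcases hγ₀ with hγ₀ | rfl
  swap
  · -- γ₀ = 0 : take b = β₀, g = γ₀ = 0
    exact ⟨β₀, by simp, 0, by simp, by simpa using hβ₀⟩
  rcases hγ₁ with hγ₁ | rfl
  swap
  · -- γ₁ = 0 : take b = β₀, g = γ₁ = 0
    exact ⟨β₀, by simp, 0, by simp, by simpa using hβ₀⟩
  rcases hβ₀ with hβ₀ | rfl
  swap
  · -- β₀ = 0 : β₁ - γ₀ = γ₁
    refine ⟨β₁, by simp, γ₀, by simp, ?_⟩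
    have h' : β₁ - γ₀ = γ₁ := by rw [zero_add] at heq; rw [heq]; abel
    rw [h']
    exact Or.inl hγ₁
  rcases hβ₁ with hβ₁ | rfl
  swap
  · -- β₁ = 0 : β₀ - γ₀ = γ₁
    refine ⟨β₀, by simp, γ₀, by simp, ?_⟩
    have h' : β₀ - γ₀ = γ₁ := by rw [add_zero] at heq; rw [heq]; abel
    rw [h']
    exact Or.inl hγ₁
  -- main case: all four are positive roots
  obtain ⟨hβ₀R, hβ₀f⟩ := hβ₀
  obtain ⟨hβ₁R, hβ₁f⟩ := hβ₁
  obtain ⟨hγ₀R, hγ₀f⟩ := hγ₀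
  obtain ⟨hγ₁R, hγ₁f⟩ := hγ₁
  obtain ⟨hαR, hαf⟩ := hsum
  -- key lemma
  have key : ∀ b ∈ Rt, ∀ g ∈ Rt, 0 < (inner ℝ b g : ℝ) →
      (b - g ∈ {β ∈ Rt | 0 < f β} ∨ b - g = 0) ∨ g - b ∈ {β ∈ Rt | 0 < f β} := by
    intro b hb g hg hin
    rcases hcrys b hb g hg hin with hd | hd
    · rcases lt_or_gt_of_ne (hf _ hd) with hneg' | hpos'
      · refine Or.inr ⟨?_, ?_⟩
        · have := hneg _ hd
          simpa [neg_sub] using this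
        · have : f (g - b) = -(f (b - g)) := by rw [← map_neg]; congr 1; abel
          rw [this]; linarith
      · exact Or.inl (Or.inl ⟨hd, hpos'⟩)
    · exact Or.inl (Or.inr hd)
  -- the sum is nonzero, so its inner square is positive
  have hα0 : β₀ + β₁ ≠ 0 := fun h => h0 (h ▸ hαR)
  have hpos : 0 < (inner ℝ (β₀ + β₁) (γ₀ + γ₁) : ℝ) := by
    rw [← heq]
    exact not_le.mp fun h => hα0 (real_inner_self_nonpos.mp h)
  have hexp : (inner ℝ (β₀ + β₁) (γ₀ + γ₁) : ℝ) =
      inner ℝ β₀ γ₀ + inner ℝ β₀ γ₁ + inner ℝ β₁ γ₀ + inner ℝ β₁ γ₁ := by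
    rw [inner_add_left, inner_add_right, inner_add_right]; ring
  have hcases : 0 < (inner ℝ β₀ γ₀ : ℝ) ∨ 0 < (inner ℝ β₀ γ₁ : ℝ) ∨
      0 < (inner ℝ β₁ γ₀ : ℝ) ∨ 0 < (inner ℝ β₁ γ₁ : ℝ) := by
    by_contra h
    push_neg at h
    obtain ⟨h1, h2, h3, h4⟩ := h
    rw [hexp] at hpos
    linarith
  have swap00 : β₁ - γ₁ = γ₀ - β₀ := by rw [sub_eq_sub_iff_add_eq_add, add_comm]; exact heq
  have swap01 : β₁ - γ₀ = γ₁ - β₀ := by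
    rw [sub_eq_sub_iff_add_eq_add, add_comm β₁, add_comm γ₁, heq]
  have swap10 : β₀ - γ₁ = γ₀ - β₁ := by
    rw [sub_eq_sub_iff_add_eq_add]; exact heq
  have swap11 : β₀ - γ₀ = γ₁ - β₁ := by
    rw [sub_eq_sub_iff_add_eq_add, heq, add_comm]
  rcases hcases with h | h | h | h
  · rcases key _ hβ₀R _ hγ₀R h with h' | h'
    · exact ⟨β₀, by simp, γ₀, by simp, h'⟩
    · exact ⟨β₁, by simp, γ₁, by simp, Or.inl (swap00 ▸ h')⟩
  · rcases key _ hβ₀R _ hγ₁R h with h' | h'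
    · exact ⟨β₀, by simp, γ₁, by simp, h'⟩
    · exact ⟨β₁, by simp, γ₀, by simp, Or.inl (swap01 ▸ h')⟩
  · rcases key _ hβ₁R _ hγ₀R h with h' | h'
    · exact ⟨β₁, by simp, γ₀, by simp, h'⟩
    · exact ⟨β₀, by simp, γ₁, by simp, Or.inl (swap10 ▸ h')⟩
  · rcases key _ hβ₁R _ hγ₁R h with h' | h'
    · exact ⟨β₁, by simp, γ₁, by simp, h'⟩
    · exact ⟨β₀, by simp, γ₀, by simp, Or.inl (swap11 ▸ h')⟩
end

section
/- Let β₀, …, β_m (m ≥ 0) and γ₀, γ₁ be positive roots in a crystallographic root system such that ∑_{i=0}^m β_i = γ₀ + γ₁ is a positive root. Then there exist an index 0 ≤ j ≤ m such that ∑_{i≠j} β_i is a positive root (or zero when m = 0), and some t ∈ {0,1} such that either ∑_{i≠j} β_i − γ_t or β_j − γ_t is a positive root or zero. -/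
private lemma aux_step {V : Type*} [NormedAddCommGroup V] [InnerProductSpace ℝ V]
    (Rt : Set V)
    (hneg : ∀ β ∈ Rt, -β ∈ Rt)
    (hcrys : ∀ β ∈ Rt, ∀ γ ∈ Rt, 0 < (inner ℝ β γ : ℝ) → β - γ ∈ Rt ∨ β - γ = 0)
    (f : V →ₗ[ℝ] ℝ) (hf : ∀ β ∈ Rt, f β ≠ 0)
    (P : Set V) (hP : P = {β ∈ Rt | 0 < f β})
    (x γ : V) (hx : x ∈ Rt) (hγ : γ ∈ Rt) (hpos : 0 < (inner ℝ x γ : ℝ)) :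
    (x - γ ∈ P ∨ x - γ = 0) ∨ γ - x ∈ P := by
  rcases hcrys x hx γ hγ hpos with h | h
  · rcases lt_trichotomy (f (x - γ)) 0 with h1 | h1 | h1
    · right
      have hmem : γ - x ∈ Rt := by
        have := hneg _ h
        simpa [neg_sub] using this
      rw [hP]
      refine ⟨hmem, ?_⟩
      have : f (γ - x) = -f (x - γ) := by
        rw [map_sub, map_sub]; ring
      rw [this]; linarith
    · exact absurd h1 (hf _ h)
    · left; left; rw [hP]; exact ⟨h, h1⟩
  · left; right; exact h

/-- If positive roots `β₀, …, β_m` satisfy `∑ βᵢ = γ₀ + γ₁`, a positive root,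
then for some `j` the smaller sum `∑_{i ≠ j} βᵢ` is a positive root (or zero when `m = 0`),
and for some `t ∈ {γ₀, γ₁}` either `∑_{i ≠ j} βᵢ - t` or `βⱼ - t` is a positive root or
zero. -/
theorem root_sum_split {V : Type*} [NormedAddCommGroup V] [InnerProductSpace ℝ V]
    (Rt : Set V) (h0 : (0 : V) ∉ Rt)
    (hneg : ∀ β ∈ Rt, -β ∈ Rt)
    (hcrys : ∀ β ∈ Rt, ∀ γ ∈ Rt, 0 < (inner ℝ β γ : ℝ) → β - γ ∈ Rt ∨ β - γ = 0)
    (f : V →ₗ[ℝ] ℝ) (hf : ∀ β ∈ Rt, f β ≠ 0)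
    (P : Set V) (hP : P = {β ∈ Rt | 0 < f β})
    (m : ℕ) (β : Fin (m + 1) → V) (hβ : ∀ i, β i ∈ P)
    (γ₀ γ₁ : V) (hγ₀ : γ₀ ∈ P) (hγ₁ : γ₁ ∈ P)
    (heq : ∑ i, β i = γ₀ + γ₁) (hsum : (∑ i, β i) ∈ P) :
    ∃ j : Fin (m + 1),
      ((∑ i ∈ Finset.univ.erase j, β i) ∈ P ∨
        (m = 0 ∧ (∑ i ∈ Finset.univ.erase j, β i) = 0)) ∧
      ∃ t ∈ ({γ₀, γ₁} : Set V),
        ((∑ i ∈ Finset.univ.erase j, β i) - t ∈ P ∨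
            (∑ i ∈ Finset.univ.erase j, β i) - t = 0) ∨
          (β j - t ∈ P ∨ β j - t = 0) := by
  have hPmem : ∀ x, x ∈ P → x ∈ Rt ∧ 0 < f x := by
    intro x hx; rw [hP] at hx; exact hx
  set α : V := ∑ i, β i with hα
  have hαRt : α ∈ Rt := (hPmem _ hsum).1
  have hαf : 0 < f α := (hPmem _ hsum).2
  have hα0 : α ≠ 0 := by
    intro h; rw [h] at hαf; simp at hαf
  -- Step A : find j with the first condition
  obtain ⟨j, hS⟩ : ∃ j : Fin (m + 1),
      ((∑ i ∈ Finset.univ.erase j, β i) ∈ P ∨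
        (m = 0 ∧ (∑ i ∈ Finset.univ.erase j, β i) = 0)) := by
    rcases Nat.eq_zero_or_pos m with hm | hm
    · subst hm
      refine ⟨0, Or.inr ⟨rfl, ?_⟩⟩
      simp
    · -- find j with ⟨α, β j⟩ > 0
      have hipos : 0 < (inner ℝ α α : ℝ) := by
        rw [real_inner_self_eq_norm_sq]
        exact pow_pos (norm_pos_iff.mpr hα0) 2
      have hsum' : (inner ℝ α α : ℝ) = ∑ j, (inner ℝ α (β j) : ℝ) := by
        rw [hα, inner_sum]
      obtain ⟨j, hj⟩ : ∃ j, 0 < (inner ℝ α (β j) : ℝ) := by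
        by_contra h
        push_neg at h
        have : (∑ j, (inner ℝ α (β j) : ℝ)) ≤ 0 :=
          Finset.sum_nonpos fun j _ => h j
        rw [hsum'] at hipos; linarith
      refine ⟨j, Or.inl ?_⟩
      have hSe : (∑ i ∈ Finset.univ.erase j, β i) = α - β j := by
        rw [hα, Finset.sum_erase_eq_sub (Finset.mem_univ j)]
      have hfS : 0 < f (∑ i ∈ Finset.univ.erase j, β i) := by
        rw [map_sum]
        apply Finset.sum_pos
        · intro i _; exact (hPmem _ (hβ i)).2
        · have : (Finset.univ.erase j).card = m := by
            rw [Finset.card_erase_of_mem (Finset.mem_univ j), Finset.card_univ,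
              Fintype.card_fin]
            omega
          rw [← Finset.card_pos, this]; exact hm
      rcases hcrys α hαRt (β j) (hPmem _ (hβ j)).1 hj with h | h
      · rw [hP]; exact ⟨by rwa [hSe], hfS⟩
      · exfalso
        rw [← hSe] at h
        rw [h] at hfS; simp at hfS
  refine ⟨j, hS, ?_⟩
  set S : V := ∑ i ∈ Finset.univ.erase j, β i with hSdef
  have hkey : β j + S = γ₀ + γ₁ := by
    rw [hSdef, Finset.sum_erase_eq_sub (Finset.mem_univ j), ← hα, ← heq]
    abel
  -- one of the four inner products is positive
  have hγsum0 : γ₀ + γ₁ ≠ 0 := by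
    rw [← heq]; exact hα0
  have hfour : 0 < (inner ℝ (β j) γ₀ : ℝ) ∨ 0 < (inner ℝ (β j) γ₁ : ℝ) ∨
      0 < (inner ℝ S γ₀ : ℝ) ∨ 0 < (inner ℝ S γ₁ : ℝ) := by
    by_contra h
    push_neg at h
    obtain ⟨h1, h2, h3, h4⟩ := h
    have hexp : (inner ℝ (β j + S) (γ₀ + γ₁) : ℝ) =
        (inner ℝ (β j) γ₀ : ℝ) + (inner ℝ (β j) γ₁ : ℝ) +
          (inner ℝ S γ₀ : ℝ) + (inner ℝ S γ₁ : ℝ) := by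
      rw [inner_add_left, inner_add_right, inner_add_right]; ring
    have hpos : 0 < (inner ℝ (β j + S) (γ₀ + γ₁) : ℝ) := by
      rw [hkey, real_inner_self_eq_norm_sq]
      exact pow_pos (norm_pos_iff.mpr hγsum0) 2
    rw [hexp] at hpos; linarith
  have hSRt : (0 < (inner ℝ S γ₀ : ℝ) ∨ 0 < (inner ℝ S γ₁ : ℝ)) → S ∈ Rt := by
    intro h
    rcases hS with hS | ⟨_, hS0⟩
    · exact (hPmem _ hS).1
    · exfalso; rw [hS0] at h
      simp at h
  have hβjRt := (hPmem _ (hβ j)).1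
  have hγ₀Rt := (hPmem _ hγ₀).1
  have hγ₁Rt := (hPmem _ hγ₁).1
  rcases hfour with h | h | h | h
  · rcases aux_step Rt hneg hcrys f hf P hP (β j) γ₀ hβjRt hγ₀Rt h with h' | h'
    · exact ⟨γ₀, Or.inl rfl, Or.inr h'⟩
    · refine ⟨γ₁, Or.inr rfl, Or.inl (Or.inl ?_)⟩
      have : S - γ₁ = γ₀ - β j := by
        rw [sub_eq_sub_iff_add_eq_add, add_comm]; exact hkey
      rwa [this]
  · rcases aux_step Rt hneg hcrys f hf P hP (β j) γ₁ hβjRt hγ₁Rt h with h' | h'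
    · exact ⟨γ₁, Or.inr rfl, Or.inr h'⟩
    · refine ⟨γ₀, Or.inl rfl, Or.inl (Or.inl ?_)⟩
      have : S - γ₀ = γ₁ - β j := by
        rw [sub_eq_sub_iff_add_eq_add, add_comm S (β j), add_comm γ₁ γ₀]
        exact hkey
      rwa [this]
  · rcases aux_step Rt hneg hcrys f hf P hP S γ₀ (hSRt (Or.inl h)) hγ₀Rt h with h' | h'
    · exact ⟨γ₀, Or.inl rfl, Or.inl h'⟩
    · refine ⟨γ₁, Or.inr rfl, Or.inr (Or.inl ?_)⟩
      have : β j - γ₁ = γ₀ - S := by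
        rw [sub_eq_sub_iff_add_eq_add]; exact hkey
      rwa [this]
  · rcases aux_step Rt hneg hcrys f hf P hP S γ₁ (hSRt (Or.inr h)) hγ₁Rt h with h' | h'
    · exact ⟨γ₁, Or.inr rfl, Or.inl h'⟩
    · refine ⟨γ₀, Or.inl rfl, Or.inr (Or.inl ?_)⟩
      have : β j - γ₀ = γ₁ - S := by
        rw [sub_eq_sub_iff_add_eq_add, add_comm γ₁ γ₀]; exact hkey
      rwa [this]
end

section
/- Let α be a simple root and β₁, …, β_m (m ≥ 1) and γ₀, γ₁ positive roots in a crystallographic root system such that α + ∑_{i=1}^m β_i = γ₀ + γ₁ is a positive root. Then there exist a subset {i₁, …, i_k} of {1, …, m} and some t ∈ {0,1} such that ∑_{j=1}^k β_{i_j} − γ_t is a positive root or zero. -/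
private lemma aux_split {V : Type*} [NormedAddCommGroup V] [InnerProductSpace ℝ V]
    (Rt : Set V)
    (hneg : ∀ β ∈ Rt, -β ∈ Rt)
    (hcrys : ∀ β ∈ Rt, ∀ γ ∈ Rt, 0 < (inner ℝ β γ : ℝ) → β - γ ∈ Rt ∨ β - γ = 0)
    (f : V →ₗ[ℝ] ℝ) (hf : ∀ β ∈ Rt, f β ≠ 0)
    (α : V) (hαR : α ∈ Rt) (hαf : 0 < f α)
    (hαsimple : ¬∃ β ∈ {x ∈ Rt | 0 < f x}, ∃ γ ∈ {x ∈ Rt | 0 < f x}, α = β + γ)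
    {ι : Type*} [DecidableEq ι] :
    ∀ (n : ℕ) (S : Finset ι), S.card = n → ∀ (β : ι → V),
    (∀ i ∈ S, β i ∈ Rt) → (∀ i ∈ S, 0 < f (β i)) →
    ∀ (γ₀ γ₁ : V), γ₀ ∈ Rt → 0 < f γ₀ → γ₁ ∈ Rt → 0 < f γ₁ →
    α + ∑ i ∈ S, β i = γ₀ + γ₁ →
    ∃ s ⊆ S, ∃ t ∈ ({γ₀, γ₁} : Set V),
      ((∑ i ∈ s, β i) - t ∈ {x ∈ Rt | 0 < f x} ∨ (∑ i ∈ s, β i) - t = 0) := by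
  intro n
  induction n using Nat.strong_induction_on with
  | _ n IH =>
    intro S hcard β hβR hβf γ₀ γ₁ hγ₀R hγ₀f hγ₁R hγ₁f heq
    set σ : V := γ₀ + γ₁ with hσdef
    have hσne : σ ≠ 0 := by
      intro h
      have : f σ = 0 := by rw [h]; simp
      rw [hσdef, map_add] at this
      linarith
    have hσpos : 0 < (inner ℝ σ σ : ℝ) := by
      rcases (real_inner_self_nonneg (x := σ)).lt_or_eq with h | h
      · exact h
      · exact absurd (inner_self_eq_zero.mp h.symm) hσne
    have hsum_inner : (inner ℝ α σ : ℝ) + ∑ i ∈ S, (inner ℝ (β i) σ : ℝ)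
        = (inner ℝ σ σ : ℝ) := by
      rw [← sum_inner, ← inner_add_left, heq]
    have hex : 0 < (inner ℝ α σ : ℝ) ∨ ∃ i ∈ S, 0 < (inner ℝ (β i) σ : ℝ) := by
      by_contra h
      push_neg at h
      obtain ⟨h1, h2⟩ := h
      have : (inner ℝ α σ : ℝ) + ∑ i ∈ S, (inner ℝ (β i) σ : ℝ) ≤ 0 :=
        add_nonpos h1 (Finset.sum_nonpos h2)
      linarith
    -- a uniform treatment of the two orderings of (γ₀, γ₁)
    have key : ∀ c c' : V, c ∈ Rt → 0 < f c → c' ∈ Rt → 0 < f c' →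
        c + c' = γ₀ + γ₁ → c ∈ ({γ₀, γ₁} : Set V) → c' ∈ ({γ₀, γ₁} : Set V) →
        ((0 < (inner ℝ α c : ℝ)) ∨ ∃ i ∈ S, 0 < (inner ℝ (β i) c : ℝ)) →
        ∃ s ⊆ S, ∃ t ∈ ({γ₀, γ₁} : Set V),
          ((∑ i ∈ s, β i) - t ∈ {x ∈ Rt | 0 < f x} ∨ (∑ i ∈ s, β i) - t = 0) := by
      intro c c' hcR hcf hc'R hc'f hcc' hcΓ hc'Γ hex'
      have h2 : α + ∑ i ∈ S, β i = c + c' := heq.trans hcc'.symm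
      rcases hex' with hposα | ⟨i, hiS, hposi⟩
      · -- Case B : ⟪α, c⟫ > 0
        rcases hcrys α hαR c hcR hposα with hmem | hzero
        · rcases lt_or_gt_of_ne (hf _ hmem) with hlt | hgt
          · -- f (α - c) < 0 : then γ_t - α is positive, take s = S, t = c'
            have hδR : c - α ∈ Rt := by
              have := hneg _ hmem; rwa [neg_sub] at this
            have hδf : 0 < f (c - α) := by
              rw [map_sub]; rw [map_sub] at hlt; linarith
            refine ⟨S, le_refl S, c', hc'Γ, Or.inl ?_⟩
            have h3 : (∑ i ∈ S, β i) - c' = c - α := by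
              rw [sub_eq_sub_iff_add_eq_add, add_comm]
              exact h2
            rw [h3]; exact ⟨hδR, hδf⟩
          · -- f (α - c) > 0 : contradicts simplicity
            exact absurd ⟨α - c, ⟨hmem, hgt⟩, c, ⟨hcR, hcf⟩, by abel⟩ hαsimple
        · -- α = c : take s = S, t = c'
          have hαc : α = c := by rwa [sub_eq_zero] at hzero
          refine ⟨S, le_refl S, c', hc'Γ, Or.inr ?_⟩
          rw [sub_eq_zero]
          have := h2; rw [hαc] at this
          exact add_left_cancel this
      · -- Case A : ⟪β i, c⟫ > 0
        rcases hcrys (β i) (hβR i hiS) c hcR hposi with hmem | hzero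
        · rcases lt_or_gt_of_ne (hf _ hmem) with hlt | hgt
          · -- f (β i - c) < 0 : recurse with γ' = c - β i
            have hγ'R : c - β i ∈ Rt := by
              have := hneg _ hmem; rwa [neg_sub] at this
            have hγ'f : 0 < f (c - β i) := by
              rw [map_sub]; rw [map_sub] at hlt; linarith
            have hn : 0 < n := by
              rw [← hcard]; exact Finset.card_pos.mpr ⟨i, hiS⟩
            have hcarde : (S.erase i).card = n - 1 := by
              rw [Finset.card_erase_of_mem hiS, hcard]
            have heq' : α + ∑ j ∈ S.erase i, β j = (c - β i) + c' := by
              have h4 : α + (β i + ∑ j ∈ S.erase i, β j) = c + c' := by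
                rw [Finset.add_sum_erase S β hiS]; exact h2
              rw [sub_add_eq_add_sub, eq_sub_iff_add_eq, ← h4]; abel
            obtain ⟨s, hsub, t, htΓ, hcase⟩ :=
              IH (n - 1) (by omega) (S.erase i) hcarde β
                (fun j hj => hβR j (Finset.mem_of_mem_erase hj))
                (fun j hj => hβf j (Finset.mem_of_mem_erase hj))
                (c - β i) c' hγ'R hγ'f hc'R hc'f heq'
            rcases htΓ with ht | ht
            · -- t = c - β i : add i to the subset, use c
              have his : i ∉ s := fun h => Finset.notMem_erase i S (hsub h)
              refine ⟨insert i s, Finset.insert_subset hiS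
                (hsub.trans (Finset.erase_subset i S)), c, hcΓ, ?_⟩
              have h5 : (∑ j ∈ insert i s, β j) - c = (∑ j ∈ s, β j) - t := by
                rw [Finset.sum_insert his, ht]; abel
              rw [h5]; exact hcase
            · -- t = c'
              rw [Set.mem_singleton_iff] at ht
              exact ⟨s, hsub.trans (Finset.erase_subset i S), c',
                hc'Γ, ht ▸ hcase⟩
          · -- f (β i - c) > 0 : s = {i}, t = c
            refine ⟨{i}, Finset.singleton_subset_iff.mpr hiS, c, hcΓ, Or.inl ?_⟩
            rw [Finset.sum_singleton]
            exact ⟨hmem, hgt⟩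
        · -- β i = c
          refine ⟨{i}, Finset.singleton_subset_iff.mpr hiS, c, hcΓ, Or.inr ?_⟩
          rw [Finset.sum_singleton]; exact hzero
    -- now split according to which inner product is positive
    have hsplit : ∀ x : V, 0 < (inner ℝ x σ : ℝ) →
        0 < (inner ℝ x γ₀ : ℝ) ∨ 0 < (inner ℝ x γ₁ : ℝ) := by
      intro x hx
      rw [hσdef, inner_add_right] at hx
      by_contra h
      push_neg at h
      linarith [h.1, h.2]
    rcases hex with hα' | ⟨i, hiS, hi'⟩
    · rcases hsplit α hα' with h | h
      · exact key γ₀ γ₁ hγ₀R hγ₀f hγ₁R hγ₁f rfl (by simp) (by simp) (Or.inl h)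
      · exact key γ₁ γ₀ hγ₁R hγ₁f hγ₀R hγ₀f (by abel) (by simp) (by simp) (Or.inl h)
    · rcases hsplit (β i) hi' with h | h
      · exact key γ₀ γ₁ hγ₀R hγ₀f hγ₁R hγ₁f rfl (by simp) (by simp)
          (Or.inr ⟨i, hiS, h⟩)
      · exact key γ₁ γ₀ hγ₁R hγ₁f hγ₀R hγ₀f (by abel) (by simp) (by simp)
          (Or.inr ⟨i, hiS, h⟩)

/-- If `α` is a simple root, `β₁, …, β_m` (`m ≥ 1`) and `γ₀, γ₁` are positive
roots with `α + ∑ βᵢ = γ₀ + γ₁` a positive root, then for some subset of indices and some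
`t ∈ {γ₀, γ₁}`, the expression `∑_{j ∈ subset} βⱼ - t` is a positive root or zero.
A simple root is a positive root which is not the sum of two positive roots. -/
theorem simple_root_sum_split {V : Type*} [NormedAddCommGroup V] [InnerProductSpace ℝ V]
    (Rt : Set V) (h0 : (0 : V) ∉ Rt)
    (hneg : ∀ β ∈ Rt, -β ∈ Rt)
    (hcrys : ∀ β ∈ Rt, ∀ γ ∈ Rt, 0 < (inner ℝ β γ : ℝ) → β - γ ∈ Rt ∨ β - γ = 0)
    (f : V →ₗ[ℝ] ℝ) (hf : ∀ β ∈ Rt, f β ≠ 0)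
    (P : Set V) (hP : P = {β ∈ Rt | 0 < f β})
    (α : V) (hα : α ∈ P) (hαsimple : ¬∃ β ∈ P, ∃ γ ∈ P, α = β + γ)
    (m : ℕ) (hm : 1 ≤ m) (β : Fin m → V) (hβ : ∀ i, β i ∈ P)
    (γ₀ γ₁ : V) (hγ₀ : γ₀ ∈ P) (hγ₁ : γ₁ ∈ P)
    (heq : α + ∑ i, β i = γ₀ + γ₁) (hsum : (α + ∑ i, β i) ∈ P) :
    ∃ s : Finset (Fin m), ∃ t ∈ ({γ₀, γ₁} : Set V),
      (∑ i ∈ s, β i) - t ∈ P ∨ (∑ i ∈ s, β i) - t = 0 := by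
  subst hP
  obtain ⟨s, _, t, htΓ, hcase⟩ :=
    aux_split Rt hneg hcrys f hf α hα.1 hα.2 hαsimple
      (Finset.univ : Finset (Fin m)).card Finset.univ rfl β
      (fun i _ => (hβ i).1) (fun i _ => (hβ i).2)
      γ₀ γ₁ hγ₀.1 hγ₀.2 hγ₁.1 hγ₁.2 heq
  exact ⟨s, t, htΓ, hcase⟩
end

section
/- Let w be an element of a finite crystallographic Weyl group with inversion set 𝔯_w = {β positive : w(β) negative}, and define for a positive root β: cross_w(β) = { w(β + ∑_{i=1}^m β_i) : β_i ∈ 𝔯_w, m ≥ 0, the argument is a root } ∩ (positive roots). Then for any simple root α not in 𝔯_w, the set cross_w(α) contains at least one simple root. -/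
/-- The inversion set of a Weyl group element `w`: positive roots sent to negative roots. -/
def invSet {V : Type*} [AddCommGroup V] [Module ℝ V] (P : Set V) (w : V ≃ₗ[ℝ] V) : Set V :=
  {β ∈ P | w β ∉ P}

/-- `crossSet P w β` is the set
`{ w(β + ∑ βᵢ) : βᵢ ∈ invSet, m ≥ 0, the image is a root } ∩ P`. -/
def crossSet {V : Type*} [AddCommGroup V] [Module ℝ V] (P : Set V) (w : V ≃ₗ[ℝ] V)
    (β : V) : Set V :=
  {γ | γ ∈ P ∧ ∃ (n : ℕ) (b : Fin n → V),
    (∀ i, b i ∈ invSet P w) ∧ γ = w (β + ∑ i, b i)}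

/-- For a Weyl group element `w` of a finite crystallographic root system and a
simple root `α` not in the inversion set of `w`, the set `cross_w(α)` contains a simple
root. Here a simple root is a positive root that is not a sum of two positive roots. -/
theorem crossSet_contains_simple {V : Type*} [NormedAddCommGroup V] [InnerProductSpace ℝ V]
    (Rt : Set V) (hfin : Rt.Finite) (h0 : (0 : V) ∉ Rt)
    (hneg : ∀ β ∈ Rt, -β ∈ Rt)
    (hcrys : ∀ β ∈ Rt, ∀ γ ∈ Rt, 0 < (inner ℝ β γ : ℝ) → β - γ ∈ Rt ∨ β - γ = 0)
    (hspan : Submodule.span ℝ Rt = ⊤)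
    (f : V →ₗ[ℝ] ℝ) (hf : ∀ β ∈ Rt, f β ≠ 0)
    (P : Set V) (hP : P = {β ∈ Rt | 0 < f β})
    (w : V ≃ₗ[ℝ] V) (hw : ∀ β ∈ Rt, w β ∈ Rt) (hw' : ∀ β ∈ Rt, w.symm β ∈ Rt)
    (α : V) (hα : α ∈ P) (hαsimple : ¬∃ β ∈ P, ∃ γ ∈ P, α = β + γ)
    (hαinv : α ∉ invSet P w) :
    ∃ α', (α' ∈ P ∧ ¬∃ β ∈ P, ∃ γ ∈ P, α' = β + γ) ∧ α' ∈ crossSet P w α := by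
  classical
  -- basic membership lemmas
  have hPm : ∀ v, v ∈ P ↔ v ∈ Rt ∧ 0 < f v := by
    intro v; rw [hP]; exact Set.mem_sep_iff
  have hNm : ∀ v, v ∈ invSet P w ↔ v ∈ P ∧ w v ∉ P := fun v => Set.mem_sep_iff
  have hPRt : ∀ v ∈ P, v ∈ Rt := fun v hv => ((hPm v).1 hv).1
  have hPf : ∀ v ∈ P, 0 < f v := fun v hv => ((hPm v).1 hv).2
  have hPmk : ∀ v, v ∈ Rt → 0 < f v → v ∈ P := fun v h1 h2 => (hPm v).2 ⟨h1, h2⟩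
  have hnotP : ∀ v ∈ Rt, v ∉ P → f v < 0 := by
    intro v hv hnp
    rcases (hf v hv).lt_or_gt with h | h
    · exact h
    · exact absurd (hPmk v hv h) hnp
  have hαRt : α ∈ Rt := hPRt _ hα
  have hαf : 0 < f α := hPf _ hα
  -- facts about the inversion set
  have hNRt : ∀ v ∈ invSet P w, v ∈ Rt := fun v hv => hPRt _ ((hNm v).1 hv).1
  have hNf : ∀ v ∈ invSet P w, 0 < f v := fun v hv => hPf _ ((hNm v).1 hv).1
  have hNfw : ∀ v ∈ invSet P w, f (w v) < 0 := by
    intro v hv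
    exact hnotP _ (hw _ (hNRt _ hv)) ((hNm v).1 hv).2
  -- sums over lists of inversion-set elements
  have hsum_nonpos : ∀ l : List V, (∀ a ∈ l, a ∈ invSet P w) → f (w l.sum) ≤ 0 := by
    intro l
    induction l with
    | nil => intro _; simp
    | cons a t ih =>
      intro hmem
      have h1 : f (w a) < 0 := hNfw a (hmem a (by simp))
      have h2 : f (w t.sum) ≤ 0 := ih (fun b hb => hmem b (by simp [hb]))
      rw [List.sum_cons, map_add, map_add]
      linarith
  have hsum_neg : ∀ l : List V, (∀ a ∈ l, a ∈ invSet P w) → l ≠ [] → f (w l.sum) < 0 := by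
    intro l hmem hne
    cases l with
    | nil => exact absurd rfl hne
    | cons a t =>
      have h1 : f (w a) < 0 := hNfw a (hmem a (by simp))
      have h2 : f (w t.sum) ≤ 0 := hsum_nonpos t (fun b hb => hmem b (by simp [hb]))
      rw [List.sum_cons, map_add, map_add]
      linarith
  -- inner products with list sums
  have hinnersum : ∀ (v : V) (l : List V), (∀ a ∈ l, (inner ℝ v a : ℝ) ≤ 0) →
      (inner ℝ v l.sum : ℝ) ≤ 0 := by
    intro v l
    induction l with
    | nil => intro _; simp
    | cons a t ih =>
      intro hmem
      have h1 : (inner ℝ v a : ℝ) ≤ 0 := hmem a (by simp)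
      have h2 : (inner ℝ v t.sum : ℝ) ≤ 0 := ih (fun b hb => hmem b (by simp [hb]))
      rw [List.sum_cons, inner_add_right]
      linarith
  -- membership in crossSet from a list representation
  have memCross : ∀ (v : V) (L : List V), (∀ a ∈ L, a ∈ invSet P w) → v ∈ P →
      v = w (α + L.sum) → v ∈ crossSet P w α := by
    intro v L hL hv hveq
    refine ⟨hv, L.length, L.get, fun i => hL _ (List.get_mem L i), ?_⟩
    have hs : ∑ i, L.get i = L.sum := by
      rw [← List.sum_ofFn, List.ofFn_get]
    rw [hveq, hs]
  -- THE KEY LEMMA.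
  have lemI : ∀ n : ℕ, ∀ l : List V, l.length ≤ n → (∀ a ∈ l, a ∈ invSet P w) →
      ∀ x y : V, x ∈ Rt → y ∈ Rt → 0 < f x → 0 < f y → 0 < f (w x) → 0 < f (w y) →
      x + y = α + l.sum →
      ∃ L : List V, (∀ a ∈ L, a ∈ invSet P w) ∧ (x = α + L.sum ∨ y = α + L.sum) := by
    intro n
    induction n with
    | zero =>
      intro l hlen hl x y hxR hyR hfx hfy hfwx hfwy hsum
      have hl0 : l = [] := List.length_eq_zero_iff.mp (Nat.le_zero.mp hlen)
      subst hl0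
      exact absurd ⟨x, hPmk x hxR hfx, y, hPmk y hyR hfy, by simpa using hsum.symm⟩ hαsimple
    | succ n IH =>
      intro l hlen hl x y hxR hyR hfx hfy hfwx hfwy hsum
      rcases eq_or_ne l [] with rfl | hlne
      · exact absurd ⟨x, hPmk x hxR hfx, y, hPmk y hyR hfy, by simpa using hsum.symm⟩ hαsimple
      -- Case A : some component pairs positively with α
      have caseA : ∀ x y : V, x ∈ Rt → y ∈ Rt → 0 < f x → 0 < f y → 0 < f (w x) →
          0 < f (w y) → x + y = α + l.sum → 0 < (inner ℝ x α : ℝ) →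
          ∃ L : List V, (∀ a ∈ L, a ∈ invSet P w) ∧ (x = α + L.sum ∨ y = α + L.sum) := by
        intro x y hxR hyR hfx hfy hfwx hfwy hsum hxa
        rcases hcrys x hxR α hαRt hxa with hσ | hσ0
        · rcases (hf _ hσ).lt_or_gt with hfσn | hfσp
          · -- f(x-α) < 0 : α decomposes, contradiction
            exfalso
            apply hαsimple
            have hRt2 : α - x ∈ Rt := by have := hneg _ hσ; rwa [neg_sub] at this
            have hf2 : 0 < f (α - x) := by
              have : f (α - x) = -(f (x - α)) := by rw [map_sub, map_sub]; ring
              linarith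
            exact ⟨x, hPmk x hxR hfx, α - x, hPmk _ hRt2 hf2, by abel⟩
          · have hwσRt : w (x - α) ∈ Rt := hw _ hσ
            rcases (hf _ hwσRt).lt_or_gt with hwσn | hwσp
            · -- x - α is in the inversion set: x-side representation
              refine ⟨[x - α], ?_, Or.inl ?_⟩
              · intro a ha
                rw [List.mem_singleton] at ha; subst ha
                refine (hNm _).2 ⟨hPmk _ hσ hfσp, fun hc => ?_⟩
                exact absurd (hPf _ hc) (by linarith)
              · rw [List.sum_singleton]; abel
            · -- w(x-α) positive : contradiction with the sign of w(l.sum)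
              exfalso
              have h1 : l.sum = (x - α) + y := by
                have h := hsum
                have : α + l.sum = α + ((x - α) + y) := by rw [← h]; abel
                exact add_left_cancel this
              have h2 : f (w l.sum) < 0 := hsum_neg l hl hlne
              rw [h1, map_add, map_add] at h2
              linarith
        · -- x = α : then y = l.sum, contradiction
          exfalso
          have hx : x = α := sub_eq_zero.mp hσ0
          subst hx
          have hy : y = l.sum := by
            have : x + y = x + l.sum := hsum
            exact add_left_cancel this
          have h2 : f (w l.sum) < 0 := hsum_neg l hl hlne
          rw [← hy] at h2
          linarith
      -- Case B : some component pairs positively with an element of l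
      have caseB : ∀ x y : V, x ∈ Rt → y ∈ Rt → 0 < f x → 0 < f y → 0 < f (w x) →
          0 < f (w y) → x + y = α + l.sum → ∀ b ∈ l, 0 < (inner ℝ x b : ℝ) →
          ∃ L : List V, (∀ a ∈ L, a ∈ invSet P w) ∧ (x = α + L.sum ∨ y = α + L.sum) := by
        intro x y hxR hyR hfx hfy hfwx hfwy hsum b hb hxb
        have hbN := hl b hb
        have hbRt : b ∈ Rt := hNRt _ hbN
        have hbfw : f (w b) < 0 := hNfw _ hbN
        have hperm : l.sum = b + (l.erase b).sum := by
          have := (List.perm_cons_erase hb).sum_eq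
          simpa [List.sum_cons] using this
        have heraseN : ∀ a ∈ l.erase b, a ∈ invSet P w :=
          fun a ha => hl a (List.mem_of_mem_erase ha)
        have h3 : x + y = α + (b + (l.erase b).sum) := by rw [hsum, hperm]
        rcases hcrys x hxR b hbRt hxb with hρ | hρ0
        · have hwρ : f (w (x - b)) = f (w x) - f (w b) := by rw [map_sub, map_sub]
          rcases (hf _ hρ).lt_or_gt with hfρn | hfρp
          · -- b - x is in the inversion set : y-side representation
            have hbxRt : b - x ∈ Rt := by have := hneg _ hρ; rwa [neg_sub] at this
            have hbxf : 0 < f (b - x) := by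
              have : f (b - x) = -(f (x - b)) := by rw [map_sub, map_sub]; ring
              linarith
            have hbxN : b - x ∈ invSet P w := by
              refine (hNm _).2 ⟨hPmk _ hbxRt hbxf, fun hc => ?_⟩
              have h4 : f (w (b - x)) = f (w b) - f (w x) := by rw [map_sub, map_sub]
              have := hPf _ hc
              linarith
            refine ⟨l.erase b ++ [b - x], ?_, Or.inr ?_⟩
            · intro a ha
              rcases List.mem_append.mp ha with ha1 | ha2
              · exact heraseN a ha1
              · rw [List.mem_singleton] at ha2; subst ha2; exact hbxN
            · rw [List.sum_append, List.sum_singleton]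
              have : x + y = x + (α + ((l.erase b).sum + (b - x))) := by
                rw [h3]; abel
              exact add_left_cancel this
          · -- strip: recurse with x - b
            have hνRt : x - b ∈ Rt := hρ
            have hlen' : (l.erase b).length ≤ n := by
              have h4 := List.length_erase_of_mem hb
              have h5 : 0 < l.length := List.length_pos_iff.mpr hlne
              omega
            have hsum' : (x - b) + y = α + (l.erase b).sum := by
              have : (x - b) + y = (x + y) - b := by abel
              rw [this, h3]; abel
            have hνfw : 0 < f (w (x - b)) := by rw [hwρ]; linarith
            obtain ⟨L, hLmem, hor⟩ := IH (l.erase b) hlen' heraseN (x - b) y hνRt hyR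
              hfρp hfy hνfw hfwy hsum'
            rcases hor with h5 | h5
            · refine ⟨L ++ [b], ?_, Or.inl ?_⟩
              · intro a ha
                rcases List.mem_append.mp ha with ha1 | ha2
                · exact hLmem a ha1
                · rw [List.mem_singleton] at ha2; subst ha2; exact hbN
              · rw [List.sum_append, List.sum_singleton]
                have h6 : x - b = α + L.sum := h5
                have : x = (x - b) + b := by abel
                rw [this, h6]; abel
            · exact ⟨L, hLmem, Or.inr h5⟩
        · -- x = b : impossible by signs of f ∘ w
          exfalso
          have hx : x = b := sub_eq_zero.mp hρ0
          rw [hx] at hfwx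
          linarith
      -- coverage: find a positive inner product
      have hμne : x + y ≠ 0 := by
        intro h
        have h1 : f (x + y) = 0 := by rw [h, map_zero]
        rw [map_add] at h1
        linarith
      have hμpos : 0 < (inner ℝ (x + y) (x + y) : ℝ) :=
        lt_of_not_ge fun hcon => hμne (real_inner_self_nonpos.mp hcon)
      have hcov : (0 < (inner ℝ x α : ℝ) ∨ 0 < (inner ℝ y α : ℝ)) ∨
          ∃ b ∈ l, (0 < (inner ℝ x b : ℝ) ∨ 0 < (inner ℝ y b : ℝ)) := by
        by_contra hno
        push_neg at hno
        obtain ⟨⟨h1, h2⟩, h3⟩ := hno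
        have e1 : (inner ℝ (x + y) α : ℝ) ≤ 0 := by rw [inner_add_left]; linarith
        have e2 : (inner ℝ (x + y) l.sum : ℝ) ≤ 0 := by
          refine hinnersum (x + y) l (fun a ha => ?_)
          rw [inner_add_left]
          have := h3 a ha
          linarith [this.1, this.2]
        have e3 : (inner ℝ (x + y) (α + l.sum) : ℝ) ≤ 0 := by
          rw [inner_add_right]; linarith
        rw [← hsum] at e3
        linarith
      rcases hcov with (hxa | hya) | ⟨b, hb, hzb⟩
      · exact caseA x y hxR hyR hfx hfy hfwx hfwy hsum hxa
      · obtain ⟨L, hL, hor⟩ := caseA y x hyR hxR hfy hfx hfwy hfwx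
          (by rw [add_comm]; exact hsum) hya
        exact ⟨L, hL, hor.symm⟩
      · rcases hzb with hxb | hyb
        · exact caseB x y hxR hyR hfx hfy hfwx hfwy hsum b hb hxb
        · obtain ⟨L, hL, hor⟩ := caseB y x hyR hxR hfy hfx hfwy hfwx
            (by rw [add_comm]; exact hsum) b hb hyb
          exact ⟨L, hL, hor.symm⟩
  -- MAIN ARGUMENT
  have hwαP : w α ∈ P := by
    by_contra h
    exact hαinv ((hNm α).2 ⟨hα, h⟩)
  have hwαcross : w α ∈ crossSet P w α := by
    refine ⟨hwαP, 0, fun _ => 0, fun i => i.elim0, ?_⟩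
    simp
  have hcrossRt : crossSet P w α ⊆ Rt := fun v hv => hPRt _ hv.1
  have hcfin : (crossSet P w α).Finite := hfin.subset hcrossRt
  obtain ⟨δ, hδ, hmin⟩ := Set.exists_min_image _ f hcfin ⟨_, hwαcross⟩
  by_cases hδsimple : ∃ β ∈ P, ∃ γ ∈ P, δ = β + γ
  swap
  · exact ⟨δ, ⟨hδ.1, hδsimple⟩, hδ⟩
  exfalso
  obtain ⟨β, hβ, γ, hγ, hδeq⟩ := hδsimple
  obtain ⟨hδP, nn, bb, hbb, hδw⟩ := hδ
  have hfβ : 0 < f β := hPf _ hβ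
  have hfγ : 0 < f γ := hPf _ hγ
  have hfδ : f δ = f β + f γ := by rw [hδeq, map_add]
  set l₀ : List V := List.ofFn bb with hl₀
  have hl₀mem : ∀ a ∈ l₀, a ∈ invSet P w := by
    intro a ha
    rw [hl₀, List.mem_ofFn] at ha
    obtain ⟨i, rfl⟩ := ha
    exact hbb i
  have hl₀sum : l₀.sum = ∑ i, bb i := by rw [hl₀, List.sum_ofFn]
  have huδ : w.symm δ = α + l₀.sum := by
    rw [hδw, LinearEquiv.symm_apply_apply, hl₀sum]
  set x₀ := w.symm β with hx₀def
  set y₀ := w.symm γ with hy₀def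
  have hwx₀ : w x₀ = β := w.apply_symm_apply β
  have hwy₀ : w y₀ = γ := w.apply_symm_apply γ
  have hx₀Rt : x₀ ∈ Rt := hw' β (hPRt _ hβ)
  have hy₀Rt : y₀ ∈ Rt := hw' γ (hPRt _ hγ)
  have hx₀y₀ : x₀ + y₀ = α + l₀.sum := by
    rw [← huδ, hδeq, map_add]
  -- helper to derive the minimality contradiction
  have contra : ∀ v ∈ P, ∀ L : List V, (∀ a ∈ L, a ∈ invSet P w) → f v < f δ →
      v = w (α + L.sum) → False := by
    intro v hv L hL hlt hveq
    have := hmin v (memCross v L hL hv hveq)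
    linarith
  rcases (hf x₀ hx₀Rt).lt_or_gt with hx₀neg | hx₀pos
  · -- f x₀ < 0 : γ ∈ crossSet with smaller f value
    have hnx₀Rt : -x₀ ∈ Rt := hneg _ hx₀Rt
    have hnx₀f : 0 < f (-x₀) := by rw [map_neg]; linarith
    have hnx₀N : -x₀ ∈ invSet P w := by
      refine (hNm _).2 ⟨hPmk _ hnx₀Rt hnx₀f, fun hc => ?_⟩
      have : f (w (-x₀)) = -(f β) := by rw [map_neg, hwx₀, map_neg]
      have := hPf _ hc
      linarith [hPf _ hc, this]
    refine contra γ hγ (l₀ ++ [-x₀]) ?_ (by linarith) ?_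
    · intro a ha
      rcases List.mem_append.mp ha with ha1 | ha2
      · exact hl₀mem a ha1
      · rw [List.mem_singleton] at ha2; subst ha2; exact hnx₀N
    · rw [List.sum_append, List.sum_singleton]
      have : α + (l₀.sum + -x₀) = y₀ := by
        have h7 : x₀ + (α + (l₀.sum + -x₀)) = x₀ + y₀ := by rw [hx₀y₀]; abel
        exact add_left_cancel h7
      rw [this, hwy₀]
  rcases (hf y₀ hy₀Rt).lt_or_gt with hy₀neg | hy₀pos
  · -- f y₀ < 0 : β ∈ crossSet with smaller f value
    have hny₀Rt : -y₀ ∈ Rt := hneg _ hy₀Rt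
    have hny₀f : 0 < f (-y₀) := by rw [map_neg]; linarith
    have hny₀N : -y₀ ∈ invSet P w := by
      refine (hNm _).2 ⟨hPmk _ hny₀Rt hny₀f, fun hc => ?_⟩
      have h6 : f (w (-y₀)) = -(f γ) := by rw [map_neg, hwy₀, map_neg]
      have := hPf _ hc
      linarith
    refine contra β hβ (l₀ ++ [-y₀]) ?_ (by linarith) ?_
    · intro a ha
      rcases List.mem_append.mp ha with ha1 | ha2
      · exact hl₀mem a ha1
      · rw [List.mem_singleton] at ha2; subst ha2; exact hny₀N
    · rw [List.sum_append, List.sum_singleton]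
      have : α + (l₀.sum + -y₀) = x₀ := by
        have h7 : y₀ + (α + (l₀.sum + -y₀)) = y₀ + x₀ := by rw [add_comm y₀ x₀, hx₀y₀]; abel
        exact add_left_cancel h7
      rw [this, hwx₀]
  -- both preimages positive: apply the key lemma
  have hfwx₀ : 0 < f (w x₀) := by rw [hwx₀]; exact hfβ
  have hfwy₀ : 0 < f (w y₀) := by rw [hwy₀]; exact hfγ
  obtain ⟨L, hLmem, hor⟩ := lemI l₀.length l₀ le_rfl hl₀mem x₀ y₀ hx₀Rt hy₀Rt
    hx₀pos hy₀pos hfwx₀ hfwy₀ hx₀y₀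
  rcases hor with h5 | h5
  · exact contra β hβ L hLmem (by linarith) (by rw [← h5, hwx₀])
  · exact contra γ hγ L hLmem (by linarith) (by rw [← h5, hwy₀])
end

section
/- Let w be an element of a finite Weyl group and let y be another element with inversion sets 𝔯_w ⊆ 𝔯_y (i.e., y ≥ w in the weak left order). Then the set 𝔯_y satisfies w(𝔯_y \ 𝔯_w) ∩ (positive roots) = 𝔯_{y w⁻¹}, where y w⁻¹ has reduced decomposition. In particular, 𝔯_y is w-nimble (i.e., contains 𝔯_w and satisfies w(𝔯_y \ 𝔯_w) ⊆ 𝔯_y) if and only if y ≥ w and y ≥ y w⁻¹ in the weak left Bruhat order. -/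
/-- Let `w, y` be elements of a finite Weyl group with `𝔯_w ⊆ 𝔯_y` (i.e.
`y ≥ w` in the weak left order).  Then `w(𝔯_y \ 𝔯_w) ∩ 𝔯₊ = 𝔯_{y w⁻¹}`, and `𝔯_y` is
`w`-nimble if and only if `y ≥ w` and `y ≥ y w⁻¹` in the weak left order (weak left order
being inclusion of inversion sets). -/
theorem invSet_nimble_iff {V : Type*} [NormedAddCommGroup V] [InnerProductSpace ℝ V]
    (Rt : Set V) (hfin : Rt.Finite) (h0 : (0 : V) ∉ Rt)
    (hneg : ∀ β ∈ Rt, -β ∈ Rt)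
    (hcrys : ∀ β ∈ Rt, ∀ γ ∈ Rt, 0 < (inner ℝ β γ : ℝ) → β - γ ∈ Rt ∨ β - γ = 0)
    (hspan : Submodule.span ℝ Rt = ⊤)
    (f : V →ₗ[ℝ] ℝ) (hf : ∀ β ∈ Rt, f β ≠ 0)
    (P : Set V) (hP : P = {β ∈ Rt | 0 < f β})
    (w : V ≃ₗ[ℝ] V) (hw : ∀ β ∈ Rt, w β ∈ Rt) (hw' : ∀ β ∈ Rt, w.symm β ∈ Rt)
    (y : V ≃ₗ[ℝ] V) (hy : ∀ β ∈ Rt, y β ∈ Rt) (hy' : ∀ β ∈ Rt, y.symm β ∈ Rt)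
    (hwy : invSet P w ⊆ invSet P y) :
    (⇑w '' (invSet P y \ invSet P w)) ∩ P = invSet P (w.symm.trans y) ∧
      ((invSet P w ⊆ invSet P y ∧ ⇑w '' (invSet P y \ invSet P w) ⊆ invSet P y) ↔
        (invSet P w ⊆ invSet P y ∧ invSet P (w.symm.trans y) ⊆ invSet P y)) := by
  have memP : ∀ β : V, β ∈ P ↔ β ∈ Rt ∧ 0 < f β := by
    intro β; rw [hP]; exact Iff.rfl
  have mem_inv : ∀ (u : V ≃ₗ[ℝ] V) (β : V), β ∈ invSet P u ↔ β ∈ P ∧ u β ∉ P :=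
    fun _ _ => Iff.rfl
  -- if β ∈ Rt and β ∉ P then -β ∈ P
  have hPneg : ∀ β ∈ Rt, β ∉ P → -β ∈ P := by
    intro β hβ hβP
    have hfβ : f β ≤ 0 := by
      by_contra h
      exact hβP ((memP β).2 ⟨hβ, lt_of_not_ge h⟩)
    have hlt : f β < 0 := lt_of_le_of_ne hfβ (hf β hβ)
    refine (memP (-β)).2 ⟨hneg β hβ, ?_⟩
    rw [map_neg]; linarith
  -- if β ∈ P then -β ∉ P
  have hPnot : ∀ β ∈ P, -β ∉ P := by
    intro β hβ hcon
    have h1 := ((memP β).1 hβ).2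
    have h2 := ((memP (-β)).1 hcon).2
    rw [map_neg] at h2; linarith
  have claim1 : (⇑w '' (invSet P y \ invSet P w)) ∩ P = invSet P (w.symm.trans y) := by
    ext γ
    constructor
    · rintro ⟨⟨β, ⟨hβy, hβw⟩, rfl⟩, hγP⟩
      obtain ⟨hβP, hyβ⟩ := (mem_inv y β).1 hβy
      refine (mem_inv _ _).2 ⟨hγP, ?_⟩
      have : (w.symm.trans y) (w β) = y β := by
        simp [LinearEquiv.trans_apply]
      rw [this]; exact hyβ
    · intro hγ
      obtain ⟨hγP, hyγ⟩ := (mem_inv _ γ).1 hγ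
      set β := w.symm γ with hβdef
      have hβRt : β ∈ Rt := hw' γ ((memP γ).1 hγP).1
      have hwβ : w β = γ := w.apply_symm_apply γ
      have htr : (w.symm.trans y) γ = y β := rfl
      rw [htr] at hyγ
      have hβP : β ∈ P := by
        by_contra hnP
        have hmβ : -β ∈ P := hPneg β hβRt hnP
        have h1 : -β ∈ invSet P w := by
          refine (mem_inv w _).2 ⟨hmβ, ?_⟩
          rw [map_neg, hwβ]
          exact hPnot γ hγP
        have h2 := (mem_inv y _).1 (hwy h1)
        have h3 : y (-β) ∉ P := h2.2
        have hyβRt : y β ∈ Rt := hy β hβRt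
        have h4 : -(y β) ∈ P := by
          apply hPneg (y β) hyβRt hyγ
        rw [map_neg] at h3
        exact h3 h4
      refine ⟨⟨β, ⟨(mem_inv y β).2 ⟨hβP, hyγ⟩, ?_⟩, hwβ⟩, hγP⟩
      intro hcon
      exact ((mem_inv w β).1 hcon).2 (hwβ ▸ hγP)
  refine ⟨claim1, ?_⟩
  constructor
  · rintro ⟨h1, h2⟩
    exact ⟨h1, claim1 ▸ fun γ hγ => h2 hγ.1⟩
  · rintro ⟨h1, h2⟩
    refine ⟨h1, ?_⟩
    rintro γ ⟨β, ⟨hβy, hβw⟩, rfl⟩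
    obtain ⟨hβP, hyβ⟩ := (mem_inv y β).1 hβy
    have hwβP : w β ∈ P := by
      by_contra hcon
      exact hβw ((mem_inv w β).2 ⟨hβP, hcon⟩)
    exact h2 (claim1 ▸ (⟨⟨β, ⟨hβy, hβw⟩, rfl⟩, hwβP⟩ :
      w β ∈ (⇑w '' (invSet P y \ invSet P w)) ∩ P))
end

section
/- Let w be an element of a finite Weyl group and 𝔑 a w-nimble subset of positive roots that also contains the inversion set 𝔯_{w⁻¹}. Then 𝔑 is also nimble for w⁻¹, i.e., 𝔯_{w⁻¹} ⊆ 𝔑 and w⁻¹(𝔑 \ 𝔯_{w⁻¹}) ⊆ 𝔑. -/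
/-- If `𝔑` is a `w`-nimble subset of positive roots (it contains `𝔯_w` and
`w(𝔑 \ 𝔯_w) ⊆ 𝔑`) that also contains `𝔯_{w⁻¹}`, then `𝔑` is also nimble for `w⁻¹`. -/
theorem nimble_inverse {V : Type*} [NormedAddCommGroup V] [InnerProductSpace ℝ V]
    (Rt : Set V) (hfin : Rt.Finite) (h0 : (0 : V) ∉ Rt)
    (hneg : ∀ β ∈ Rt, -β ∈ Rt)
    (hcrys : ∀ β ∈ Rt, ∀ γ ∈ Rt, 0 < (inner ℝ β γ : ℝ) → β - γ ∈ Rt ∨ β - γ = 0)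
    (hspan : Submodule.span ℝ Rt = ⊤)
    (f : V →ₗ[ℝ] ℝ) (hf : ∀ β ∈ Rt, f β ≠ 0)
    (P : Set V) (hP : P = {β ∈ Rt | 0 < f β})
    (w : V ≃ₗ[ℝ] V) (hw : ∀ β ∈ Rt, w β ∈ Rt) (hw' : ∀ β ∈ Rt, w.symm β ∈ Rt)
    (N : Set V) (hNP : N ⊆ P)
    (hNw : invSet P w ⊆ N) (hNnimble : ⇑w '' (N \ invSet P w) ⊆ N)
    (hNwinv : invSet P w.symm ⊆ N) :
    invSet P w.symm ⊆ N ∧ ⇑w.symm '' (N \ invSet P w.symm) ⊆ N := by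
  refine ⟨hNwinv, ?_⟩
  rintro - ⟨β, ⟨hβN, hβnot⟩, rfl⟩
  have hβP : β ∈ P := hNP hβN
  have hγP : w.symm β ∈ P := by
    by_contra h
    exact hβnot ⟨hβP, h⟩
  -- powers of w preserve Rt
  have hpow : ∀ k : ℕ, ∀ v ∈ Rt, (w ^ k) v ∈ Rt := by
    intro k
    induction k with
    | zero => intro v hv; simpa using hv
    | succ k ih =>
      intro v hv
      have : (w ^ (k + 1)) v = (w ^ k) (w v) := by
        rw [pow_succ]; rfl
      rw [this]
      exact ih _ (hw v hv)
  -- powers of w are surjective on Rt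
  have hsurj : ∀ k : ℕ, ∀ γ ∈ Rt, ∃ v ∈ Rt, (w ^ k) v = γ := by
    intro k
    induction k with
    | zero => intro γ hγ; exact ⟨γ, hγ, by simp⟩
    | succ k ih =>
      intro γ hγ
      obtain ⟨v, hv, hveq⟩ := ih γ hγ
      refine ⟨w.symm v, hw' v hv, ?_⟩
      have : (w ^ (k + 1)) (w.symm v) = (w ^ k) (w (w.symm v)) := by
        rw [pow_succ]; rfl
      rw [this, w.apply_symm_apply, hveq]
  -- finite order on Rt
  haveI : Finite ↥Rt := hfin.to_subtype
  have hex : ∃ n : ℕ, 1 ≤ n ∧ ∀ v ∈ Rt, (w ^ n) v = v := by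
    have key : ∀ k l : ℕ, k < l → (∀ v ∈ Rt, (w ^ k) v = (w ^ l) v) →
        ∃ n : ℕ, 1 ≤ n ∧ ∀ v ∈ Rt, (w ^ n) v = v := by
      intro k l hkl heq
      refine ⟨l - k, by omega, ?_⟩
      intro γ hγ
      obtain ⟨v, hv, rfl⟩ := hsurj k γ hγ
      have hl : (w ^ l) v = (w ^ (l - k)) ((w ^ k) v) := by
        have : w ^ l = w ^ (l - k) * w ^ k := by
          rw [← pow_add]; congr 1; omega
        rw [this]; rfl
      rw [← hl, ← heq v hv]
    let F : ℕ → (↥Rt → ↥Rt) := fun k v => ⟨(w ^ k) v.1, hpow k v.1 v.2⟩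
    obtain ⟨k, l, hkl, hF⟩ := Finite.exists_ne_map_eq_of_infinite F
    have heq : ∀ v ∈ Rt, (w ^ k) v = (w ^ l) v := by
      intro v hv
      have := congrFun hF ⟨v, hv⟩
      exact congrArg Subtype.val this
    rcases lt_or_gt_of_ne hkl with h | h
    · exact key k l h heq
    · exact key l k h (fun v hv => (heq v hv).symm)
  obtain ⟨n, hn1, hfix⟩ := hex
  -- w^n = id on all of V via the span
  have hfixall : ∀ v : V, (w ^ n) v = v := by
    intro v
    have hle : Submodule.span ℝ Rt ≤ LinearMap.eqLocus ((w ^ n : V ≃ₗ[ℝ] V) : V →ₗ[ℝ] V) LinearMap.id := by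
      rw [Submodule.span_le]
      intro x hx
      exact hfix x hx
    have : v ∈ LinearMap.eqLocus ((w ^ n : V ≃ₗ[ℝ] V) : V →ₗ[ℝ] V) LinearMap.id := by
      apply hle
      rw [hspan]; trivial
    simpa using this
  -- main induction
  set γ := w.symm β with hγ
  have hγ1 : (w ^ 1) γ = β := by simp [hγ]
  have key : ∀ i : ℕ, 1 ≤ i → (w ^ i) γ ∈ P → (w ^ i) γ ∈ N := by
    intro i hi
    induction i, hi using Nat.le_induction with
    | base => intro _; rw [hγ1]; exact hβN
    | succ i hi ih =>
      intro hiP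
      have hstep : (w ^ (i + 1)) γ = w ((w ^ i) γ) := by
        rw [pow_succ']; rfl
      by_cases hx : (w ^ i) γ ∈ P
      · have hxN : (w ^ i) γ ∈ N := ih hx
        have hxnot : (w ^ i) γ ∉ invSet P w := by
          intro ⟨_, hwx⟩
          rw [hstep] at hiP
          exact hwx hiP
        rw [hstep]
        exact hNnimble ⟨(w ^ i) γ, ⟨hxN, hxnot⟩, rfl⟩
      · apply hNwinv
        refine ⟨hiP, ?_⟩
        rw [hstep, w.symm_apply_apply]
        exact hx
  have : (w ^ n) γ ∈ N := key n hn1 (by rw [hfixall γ]; exact hγP)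
  rwa [hfixall γ] at this
end

section
/- Let β₁, …, β_k and γ₁, …, γ_m be positive roots in a crystallographic root system such that δ = ∑ β_i + ∑ γ_i is a root. Then {1, …, m} can be partitioned into k subsets {i_{j,1}, …, i_{j,m_j}} (1 ≤ j ≤ k), possibly empty, such that for each j the sum δ_j = β_j + ∑_{l=1}^{m_j} γ_{i_{j,l}} is a root, and ∑_{j=1}^k δ_j = δ. -/
open Finset

section Aux

variable {V : Type*} [NormedAddCommGroup V] [InnerProductSpace ℝ V]

private lemma inner_self_pos' {x : V} (hx : x ≠ 0) : (0 : ℝ) < inner ℝ x x :=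
  lt_of_not_ge fun h => hx (real_inner_self_nonpos.1 h)

private lemma root_add_of_inner_neg (Rt : Set V)
    (hneg : ∀ β ∈ Rt, -β ∈ Rt)
    (hcrys : ∀ β ∈ Rt, ∀ γ ∈ Rt, 0 < (inner ℝ β γ : ℝ) → β - γ ∈ Rt ∨ β - γ = 0)
    {a b : V} (ha : a ∈ Rt) (hb : b ∈ Rt) (hab : (inner ℝ a b : ℝ) < 0)
    (hne : a + b ≠ 0) : a + b ∈ Rt := by
  have hb' := hneg b hb
  have hpos : (0 : ℝ) < inner ℝ a (-b) := by rw [inner_neg_right]; linarith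
  rcases hcrys a ha (-b) hb' hpos with h | h
  · rwa [sub_neg_eq_add] at h
  · rw [sub_neg_eq_add] at h; exact absurd h hne

private lemma step_lemma (Rt : Set V) (h0 : (0 : V) ∉ Rt)
    (hneg : ∀ β ∈ Rt, -β ∈ Rt)
    (hcrys : ∀ β ∈ Rt, ∀ γ ∈ Rt, 0 < (inner ℝ β γ : ℝ) → β - γ ∈ Rt ∨ β - γ = 0)
    (f : V →ₗ[ℝ] ℝ) :
    ∀ (n k : ℕ), k ≤ n → 0 < k → ∀ (d : Fin k → V) (g : V),
      (∀ j, d j ∈ Rt) → (∀ j, 0 < f (d j)) → g ∈ Rt → 0 < f g →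
      (∑ j, d j) + g ∈ Rt → ∃ j, d j + g ∈ Rt := by
  intro n
  induction n with
  | zero => intro k hkn hk; omega
  | succ n ih =>
    intro k hkn hk d g hd hfd hg hfg hδ
    by_cases hex : ∃ j, (inner ℝ (d j) g : ℝ) < 0
    · obtain ⟨j, hj⟩ := hex
      refine ⟨j, root_add_of_inner_neg Rt hneg hcrys (hd j) hg hj ?_⟩
      intro h
      have h1 : f (d j + g) = 0 := by rw [h, map_zero]
      rw [map_add] at h1
      linarith [hfd j, hfg]
    · push_neg at hex
      match k, hk with
      | 1, _ =>
        refine ⟨0, ?_⟩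
        simpa using hδ
      | (k' + 2), _ =>
        have hsum_ne : (∑ j, d j) ≠ 0 := by
          intro h
          have h1 : f (∑ j, d j) = 0 := by rw [h, map_zero]
          rw [map_sum] at h1
          have h2 : 0 < ∑ j, f (d j) :=
            Finset.sum_pos (fun j _ => hfd j) Finset.univ_nonempty
          linarith
        have hinner : ∃ j, 0 < (inner ℝ ((∑ j, d j) + g) (d j) : ℝ) := by
          by_contra hcon
          push_neg at hcon
          have h1 : (inner ℝ ((∑ j, d j) + g) (∑ j, d j) : ℝ) ≤ 0 := by
            rw [inner_sum]
            exact Finset.sum_nonpos fun j _ => hcon j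
          have h2 : (inner ℝ ((∑ j, d j) + g) (∑ j, d j) : ℝ)
              = inner ℝ (∑ j, d j) (∑ j, d j) + inner ℝ g (∑ j, d j) := by
            rw [inner_add_left]
          have h3 : (0 : ℝ) < inner ℝ (∑ j, d j) (∑ j, d j) :=
            inner_self_pos' hsum_ne
          have h4 : (0 : ℝ) ≤ inner ℝ g (∑ j, d j) := by
            rw [inner_sum]
            refine Finset.sum_nonneg fun j _ => ?_
            rw [real_inner_comm]
            exact hex j
          linarith
        obtain ⟨j, hj⟩ := hinner
        have hsplit : (∑ x, d x) = d j + ∑ l, d (j.succAbove l) :=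
          Fin.sum_univ_succAbove d j
        have hrest : ((∑ x, d x) + g) - d j = (∑ l, d (j.succAbove l)) + g := by
          rw [hsplit]; abel
        have hfpos : 0 < f ((∑ l, d (j.succAbove l)) + g) := by
          rw [map_add, map_sum]
          have h5 : (0 : ℝ) ≤ ∑ l, f (d (j.succAbove l)) :=
            Finset.sum_nonneg fun l _ => (hfd _).le
          linarith
        have hroot : (∑ l, d (j.succAbove l)) + g ∈ Rt := by
          rcases hcrys _ hδ (d j) (hd j) hj with h | h
          · rwa [hrest] at h
          · rw [hrest] at h
            rw [h, map_zero] at hfpos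
            exact absurd hfpos (lt_irrefl 0)
        obtain ⟨l, hl⟩ := ih (k' + 1) (by omega) (by omega)
          (fun l => d (j.succAbove l)) g (fun l => hd _) (fun l => hfd _)
          hg hfg hroot
        exact ⟨j.succAbove l, hl⟩

private lemma aux_partition (Rt : Set V) (h0 : (0 : V) ∉ Rt)
    (hneg : ∀ β ∈ Rt, -β ∈ Rt)
    (hcrys : ∀ β ∈ Rt, ∀ γ ∈ Rt, 0 < (inner ℝ β γ : ℝ) → β - γ ∈ Rt ∨ β - γ = 0)
    (f : V →ₗ[ℝ] ℝ) :
    ∀ (n k m : ℕ), k + m ≤ n → 0 < k →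
    ∀ (β : Fin k → V) (γ : Fin m → V),
      (∀ j, β j ∈ Rt) → (∀ j, 0 < f (β j)) →
      (∀ i, γ i ∈ Rt) → (∀ i, 0 < f (γ i)) →
      (∑ j, β j) + (∑ i, γ i) ∈ Rt →
      ∃ part : Fin m → Fin k,
        (∀ j, (β j + ∑ i ∈ Finset.univ.filter (fun i => part i = j), γ i) ∈ Rt) ∧
        (∑ j, (β j + ∑ i ∈ Finset.univ.filter (fun i => part i = j), γ i)) =
          (∑ j, β j) + ∑ i, γ i := by
  intro n
  induction n with
  | zero => intro k m h hk; omega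
  | succ n ih =>
    intro k m hkm hk β γ hβ hfβ hγ hfγ hδ
    match m with
    | 0 =>
      refine ⟨fun i => i.elim0, fun j => ?_, ?_⟩
      · simpa using hβ j
      · simp
    | (m' + 1) =>
      match k, hk with
      | 1, _ =>
        have hfil : ∀ j : Fin 1,
            (Finset.univ.filter (fun _ : Fin (m' + 1) => (0 : Fin 1) = j))
              = Finset.univ := by
          intro j
          apply Finset.filter_true_of_mem
          intro i _
          exact Subsingleton.elim _ _
        refine ⟨fun _ => 0, fun j => ?_, ?_⟩
        · rw [hfil j]
          have hj0 : j = 0 := Subsingleton.elim _ _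
          rw [hj0]
          simpa [Fin.sum_univ_one] using hδ
        · rw [Fin.sum_univ_one, Fin.sum_univ_one, hfil]
      | (k' + 2), _ =>
        have hδne : (∑ j, β j) + (∑ i, γ i) ≠ 0 := by
          intro h; rw [h] at hδ; exact h0 hδ
        by_cases hex : ∃ i, 0 < (inner ℝ ((∑ j, β j) + (∑ i, γ i)) (γ i) : ℝ)
        · -- γ-branch
          obtain ⟨i, hi⟩ := hex
          have hsplitγ : (∑ x, γ x) = γ i + ∑ l, γ (i.succAbove l) :=
            Fin.sum_univ_succAbove γ i
          have hrest : ((∑ j, β j) + (∑ x, γ x)) - γ i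
              = (∑ j, β j) + ∑ l, γ (i.succAbove l) := by
            rw [hsplitγ]; abel
          have hfpos : 0 < f ((∑ j, β j) + ∑ l, γ (i.succAbove l)) := by
            rw [map_add, map_sum, map_sum]
            have h1 : 0 < ∑ j, f (β j) :=
              Finset.sum_pos (fun j _ => hfβ j) Finset.univ_nonempty
            have h2 : (0 : ℝ) ≤ ∑ l, f (γ (i.succAbove l)) :=
              Finset.sum_nonneg fun l _ => (hfγ _).le
            linarith
          have hroot : (∑ j, β j) + ∑ l, γ (i.succAbove l) ∈ Rt := by
            rcases hcrys _ hδ (γ i) (hγ i) hi with h | h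
            · rwa [hrest] at h
            · rw [hrest] at h
              rw [h, map_zero] at hfpos
              exact absurd hfpos (lt_irrefl 0)
          obtain ⟨part', hp1, hp2⟩ := ih (k' + 2) m' (by omega) (by omega)
            β (fun l => γ (i.succAbove l)) hβ hfβ (fun l => hγ _) (fun l => hfγ _)
            hroot
          set d : Fin (k' + 2) → V := fun j =>
            β j + ∑ l ∈ Finset.univ.filter (fun l => part' l = j), γ (i.succAbove l)
            with hd_def
          have hfd : ∀ j, 0 < f (d j) := by
            intro j
            rw [hd_def]
            simp only [map_add, map_sum]
            have h2 : (0 : ℝ) ≤ ∑ l ∈ Finset.univ.filter (fun l => part' l = j),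
                f (γ (i.succAbove l)) := Finset.sum_nonneg fun l _ => (hfγ _).le
            linarith [hfβ j]
          have hsum_d : (∑ j, d j) = (∑ j, β j) + ∑ l, γ (i.succAbove l) := hp2
          have hδ' : (∑ j, d j) + γ i ∈ Rt := by
            rw [hsum_d]
            have : ((∑ j, β j) + ∑ l, γ (i.succAbove l)) + γ i
                = (∑ j, β j) + ∑ x, γ x := by rw [hsplitγ]; abel
            rwa [this]
          obtain ⟨j₀, hj₀⟩ := step_lemma Rt h0 hneg hcrys f (k' + 2) (k' + 2)
            le_rfl (by omega) d (γ i) hp1 hfd (hγ i) (hfγ i) hδ'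
          refine ⟨fun x => (finSuccEquiv' i x).elim j₀ part', ?_, ?_⟩ <;>
          · have hpart_i : (finSuccEquiv' i i).elim j₀ part' = j₀ := by
              rw [finSuccEquiv'_at]; rfl
            have hpart_sA : ∀ l, (finSuccEquiv' i (i.succAbove l)).elim j₀ part'
                = part' l := by
              intro l; rw [finSuccEquiv'_succAbove]; rfl
            have key : ∀ j : Fin (k' + 2),
                (∑ x ∈ Finset.univ.filter
                    (fun x => (finSuccEquiv' i x).elim j₀ part' = j), γ x)
                = (if j₀ = j then γ i else 0)
                  + ∑ l ∈ Finset.univ.filter (fun l => part' l = j),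
                      γ (i.succAbove l) := by
              intro j
              rw [Finset.sum_filter, Finset.sum_filter,
                Fin.sum_univ_succAbove
                  (fun x => if (finSuccEquiv' i x).elim j₀ part' = j then γ x else 0) i]
              congr 1
              · rw [hpart_i]
              · exact Finset.sum_congr rfl fun l _ => by rw [hpart_sA l]
            have hdj : ∀ j : Fin (k' + 2),
                β j + (∑ x ∈ Finset.univ.filter
                    (fun x => (finSuccEquiv' i x).elim j₀ part' = j), γ x)
                = d j + (if j₀ = j then γ i else 0) := by
              intro j
              rw [key j, hd_def]
              exact (add_left_comm _ _ _).trans (add_comm _ _)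
            first
            | · intro j
                rw [hdj j]
                by_cases hjj : j₀ = j
                · subst hjj
                  rw [if_pos rfl]
                  exact hj₀
                · rw [if_neg hjj, add_zero]
                  exact hp1 j
            | · have hsum2 : (∑ j : Fin (k' + 2), (if j₀ = j then γ i else 0)) = γ i := by
                  simp
                calc (∑ j, (β j + ∑ x ∈ Finset.univ.filter
                        (fun x => (finSuccEquiv' i x).elim j₀ part' = j), γ x))
                    = ∑ j, (d j + (if j₀ = j then γ i else 0)) :=
                      Finset.sum_congr rfl fun j _ => hdj j
                  _ = (∑ j, d j) + ∑ j : Fin (k' + 2), (if j₀ = j then γ i else 0) :=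
                      Finset.sum_add_distrib
                  _ = ((∑ j, β j) + ∑ l, γ (i.succAbove l)) + γ i := by
                      rw [hsum_d, hsum2]
                  _ = (∑ j, β j) + ∑ x, γ x := by rw [hsplitγ]; abel
        · -- β-branch
          have hexβ : ∃ j, 0 < (inner ℝ ((∑ j, β j) + (∑ i, γ i)) (β j) : ℝ) := by
            push_neg at hex
            by_contra hcon
            push_neg at hcon
            have h2 : (inner ℝ ((∑ j, β j) + (∑ i, γ i))
                ((∑ j, β j) + (∑ i, γ i)) : ℝ)
                = (∑ j, (inner ℝ ((∑ j, β j) + (∑ i, γ i)) (β j) : ℝ))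
                  + ∑ i, (inner ℝ ((∑ j, β j) + (∑ i, γ i)) (γ i) : ℝ) := by
              rw [inner_add_right, inner_sum, inner_sum]
            have h3 : (0 : ℝ) < inner ℝ ((∑ j, β j) + (∑ i, γ i))
                ((∑ j, β j) + (∑ i, γ i)) := inner_self_pos' hδne
            have h4 : (∑ j, (inner ℝ ((∑ j, β j) + (∑ i, γ i)) (β j) : ℝ)) ≤ 0 :=
              Finset.sum_nonpos fun j _ => hcon j
            have h5 : (∑ i, (inner ℝ ((∑ j, β j) + (∑ i, γ i)) (γ i) : ℝ)) ≤ 0 :=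
              Finset.sum_nonpos fun i _ => hex i
            linarith
          obtain ⟨j, hj⟩ := hexβ
          have hsplitβ : (∑ x, β x) = β j + ∑ l, β (j.succAbove l) :=
            Fin.sum_univ_succAbove β j
          have hrest : ((∑ x, β x) + (∑ i, γ i)) - β j
              = (∑ l, β (j.succAbove l)) + ∑ i, γ i := by
            rw [hsplitβ]; abel
          have hfpos : 0 < f ((∑ l, β (j.succAbove l)) + ∑ i, γ i) := by
            rw [map_add, map_sum, map_sum]
            have h1 : 0 < ∑ l, f (β (j.succAbove l)) :=
              Finset.sum_pos (fun l _ => hfβ _) Finset.univ_nonempty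
            have h2 : (0 : ℝ) ≤ ∑ i, f (γ i) :=
              Finset.sum_nonneg fun i _ => (hfγ _).le
            linarith
          have hroot : (∑ l, β (j.succAbove l)) + ∑ i, γ i ∈ Rt := by
            rcases hcrys _ hδ (β j) (hβ j) hj with h | h
            · rwa [hrest] at h
            · rw [hrest] at h
              rw [h, map_zero] at hfpos
              exact absurd hfpos (lt_irrefl 0)
          obtain ⟨part', hp1, hp2⟩ := ih (k' + 1) (m' + 1) (by omega) (by omega)
            (fun l => β (j.succAbove l)) γ (fun l => hβ _) (fun l => hfβ _) hγ hfγ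
            hroot
          refine ⟨fun x => j.succAbove (part' x), ?_, ?_⟩ <;>
          · have hfilj : Finset.univ.filter
                (fun x : Fin (m' + 1) => j.succAbove (part' x) = j) = ∅ :=
              Finset.filter_false_of_mem fun x _ => Fin.succAbove_ne j (part' x)
            have hfil : ∀ l, Finset.univ.filter
                  (fun x : Fin (m' + 1) => j.succAbove (part' x) = j.succAbove l)
                = Finset.univ.filter (fun x => part' x = l) := by
              intro l
              apply Finset.filter_congr
              intro x _
              exact Fin.succAbove_right_injective.eq_iff
            first
            | · intro j''
                rcases eq_or_ne j'' j with rfl | hne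
                · rw [hfilj, Finset.sum_empty, add_zero]
                  exact hβ j''
                · obtain ⟨l, rfl⟩ := Fin.exists_succAbove_eq hne
                  rw [hfil l]
                  exact hp1 l
            | · rw [Fin.sum_univ_succAbove (fun j'' => β j'' + ∑ x ∈
                  Finset.univ.filter (fun x => j.succAbove (part' x) = j''), γ x) j]
                beta_reduce
                rw [hfilj, Finset.sum_empty, add_zero]
                have h6 : (∑ l, (β (j.succAbove l) + ∑ x ∈
                    Finset.univ.filter (fun x => j.succAbove (part' x)
                      = j.succAbove l), γ x))
                    = (∑ l, β (j.succAbove l)) + ∑ i, γ i := by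
                  rw [← hp2]
                  exact Finset.sum_congr rfl fun l _ => by rw [hfil l]
                rw [h6, hsplitβ]
                abel

end Aux

/-- If `β₁, …, β_k` and `γ₁, …, γ_m` are positive roots whose total sum `δ`
is a root, then `{1, …, m}` can be partitioned into `k` (possibly empty) subsets, encoded
by an assignment `part : Fin m → Fin k`, so that each `δⱼ = βⱼ + ∑_{part i = j} γᵢ` is a
root and `∑ⱼ δⱼ = δ`. -/
theorem partition_gammas_among_betas {V : Type*} [NormedAddCommGroup V]
    [InnerProductSpace ℝ V]
    (Rt : Set V) (h0 : (0 : V) ∉ Rt)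
    (hneg : ∀ β ∈ Rt, -β ∈ Rt)
    (hcrys : ∀ β ∈ Rt, ∀ γ ∈ Rt, 0 < (inner ℝ β γ : ℝ) → β - γ ∈ Rt ∨ β - γ = 0)
    (f : V →ₗ[ℝ] ℝ) (hf : ∀ β ∈ Rt, f β ≠ 0)
    (P : Set V) (hP : P = {β ∈ Rt | 0 < f β})
    (k : ℕ) (hk : 0 < k) (m : ℕ)
    (β : Fin k → V) (hβ : ∀ j, β j ∈ P)
    (γ : Fin m → V) (hγ : ∀ i, γ i ∈ P)
    (hδ : (∑ j, β j) + ∑ i, γ i ∈ Rt) :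
    ∃ part : Fin m → Fin k,
      (∀ j, (β j + ∑ i ∈ Finset.univ.filter (fun i => part i = j), γ i) ∈ Rt) ∧
      (∑ j, (β j + ∑ i ∈ Finset.univ.filter (fun i => part i = j), γ i)) =
        (∑ j, β j) + ∑ i, γ i := by
  subst hP
  exact aux_partition Rt h0 hneg hcrys f (k + m) k m le_rfl hk β γ
    (fun j => (hβ j).1) (fun j => (hβ j).2) (fun i => (hγ i).1) (fun i => (hγ i).2) hδ
end

section
/- Let w be an element of a finite Weyl group, 𝔑 a convex set of positive roots containing 𝔯_w, and 𝔏 ⊆ 𝔯 \ 𝔑 a subset of roots satisfying w(𝔏) = 𝔏 = −𝔏 and such that 𝔏 ⊔ 𝔯_w is convex. Then cross_w(𝔑) ∩ 𝔏 = ∅ and Cross_w(𝔑) ∩ 𝔏 = ∅. -/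
/-- The extension of `crossSet` to sets of positive roots, by taking unions. -/
def crossIter {V : Type*} [AddCommGroup V] [Module ℝ V] (P : Set V) (w : V ≃ₗ[ℝ] V)
    (N : Set V) : Set V :=
  ⋃ β ∈ N, crossSet P w β

/-- `N + L`: roots which are positive linear combinations of a member of `N` and
a member of `L`, together with `N` itself. -/
def plusSet {V : Type*} [AddCommGroup V] [Module ℝ V] (Rt N L : Set V) : Set V :=
  {v ∈ Rt | ∃ β₀ ∈ N, ∃ β₁ ∈ L, ∃ c₀ c₁ : ℝ, 0 < c₀ ∧ 0 < c₁ ∧ v = c₀ • β₀ + c₁ • β₁} ∪ N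

/-- `Cross_w(N) = w(N + 𝔯_w) ∩ (positive roots)`. -/
def CrossSet {V : Type*} [AddCommGroup V] [Module ℝ V] (Rt P : Set V) (w : V ≃ₗ[ℝ] V)
    (N : Set V) : Set V :=
  (⇑w '' plusSet Rt N (invSet P w)) ∩ P

/-- A subset of roots is convex if it is closed under taking roots which are positive
linear combinations of two of its members. -/
def ConvexRoots {V : Type*} [AddCommGroup V] [Module ℝ V] (Rt S : Set V) : Prop :=
  ∀ β ∈ S, ∀ γ ∈ S, ∀ c₀ c₁ : ℝ, 0 < c₀ → 0 < c₁ →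
    c₀ • β + c₁ • γ ∈ Rt → c₀ • β + c₁ • γ ∈ S


theorem sum_mem_convexRoots {V : Type*} [NormedAddCommGroup V] [InnerProductSpace ℝ V]
    (Rt : Set V) (h0 : (0 : V) ∉ Rt)
    (hcrys : ∀ β ∈ Rt, ∀ γ ∈ Rt, 0 < (inner ℝ β γ : ℝ) → β - γ ∈ Rt ∨ β - γ = 0)
    (S : Set V) (hS : ConvexRoots Rt S) :
    ∀ (k : ℕ) (a : Fin (k + 1) → V), (∀ i, a i ∈ S ∩ Rt) →
      ∑ i, a i ∈ Rt → ∑ i, a i ∈ S := by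
  intro k
  induction k with
  | zero =>
    intro a ha _
    simpa using (ha 0).1
  | succ k ih =>
    intro a ha hsum
    have hβ0 : (∑ i, a i) ≠ 0 := fun h => h0 (h ▸ hsum)
    have hpos : 0 < (inner ℝ (∑ i, a i) (∑ i, a i) : ℝ) :=
      lt_of_not_ge (fun h => hβ0 (real_inner_self_nonpos.1 h))
    have hex : ∃ i, 0 < (inner ℝ (∑ i, a i) (a i) : ℝ) := by
      by_contra h
      push_neg at h
      have heq : (inner ℝ (∑ i, a i) (∑ i, a i) : ℝ) = ∑ i, (inner ℝ (∑ j, a j) (a i) : ℝ) :=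
        inner_sum _ _ _
      have := Finset.sum_nonpos (fun i (_ : i ∈ Finset.univ) => h i)
      rw [heq] at hpos
      linarith
    obtain ⟨i, hi⟩ := hex
    rcases hcrys _ hsum _ (ha i).2 hi with hr | hz
    · have hrest : (∑ j, a j) - a i = ∑ j, a (i.succAbove j) := by
        rw [Fin.sum_univ_succAbove a i]; abel
      have hmemS : (∑ j, a j) - a i ∈ S := by
        rw [hrest]
        exact ih _ (fun j => ha _) (hrest ▸ hr)
      have hfin := hS _ hmemS _ (ha i).1 1 1 one_pos one_pos
        (by simpa using hsum)
      simpa using hfin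
    · rw [sub_eq_zero] at hz
      rw [hz]; exact (ha i).1

/-- For a convex set `𝔑` of positive roots containing `𝔯_w` and a subset
`𝔏 ⊆ 𝔯 \ 𝔑` with `w(𝔏) = 𝔏 = -𝔏` such that `𝔏 ⊔ 𝔯_w` is convex, both `cross_w(𝔑)` and
`Cross_w(𝔑)` are disjoint from `𝔏`. -/
theorem cross_avoids_leavener {V : Type*} [NormedAddCommGroup V] [InnerProductSpace ℝ V]
    (Rt : Set V) (hfin : Rt.Finite) (h0 : (0 : V) ∉ Rt)
    (hneg : ∀ β ∈ Rt, -β ∈ Rt)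
    (hcrys : ∀ β ∈ Rt, ∀ γ ∈ Rt, 0 < (inner ℝ β γ : ℝ) → β - γ ∈ Rt ∨ β - γ = 0)
    (hspan : Submodule.span ℝ Rt = ⊤)
    (f : V →ₗ[ℝ] ℝ) (hf : ∀ β ∈ Rt, f β ≠ 0)
    (P : Set V) (hP : P = {β ∈ Rt | 0 < f β})
    (w : V ≃ₗ[ℝ] V) (hw : ∀ β ∈ Rt, w β ∈ Rt) (hw' : ∀ β ∈ Rt, w.symm β ∈ Rt)
    (N : Set V) (hNP : N ⊆ P) (hconv : ConvexRoots Rt N) (hNw : invSet P w ⊆ N)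
    (L : Set V) (hL : L ⊆ Rt \ N)
    (hLw : ⇑w '' L = L) (hLneg : ∀ β, β ∈ L ↔ -β ∈ L)
    (hLRw : ConvexRoots Rt (L ∪ invSet P w)) :
    crossIter P w N ∩ L = ∅ ∧ CrossSet Rt P w N ∩ L = ∅ := by
  have hPRt : P ⊆ Rt := by rw [hP]; exact fun x hx => hx.1
  have hinvP : invSet P w ⊆ P := fun x hx => hx.1
  have hwL : ∀ β, β ∈ L ↔ w β ∈ L := by
    intro β
    constructor
    · intro h; rw [← hLw]; exact ⟨β, h, rfl⟩
    · intro h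
      rw [← hLw] at h
      obtain ⟨γ, hγ, he⟩ := h
      rwa [← w.injective he]
  have hnegNotP : ∀ β ∈ N, -β ∉ P := by
    intro β hβ hmem
    rw [hP] at hmem
    have h1 : 0 < f β := by
      have := hNP hβ; rw [hP] at this; exact this.2
    have h2 : 0 < f (-β) := hmem.2
    rw [map_neg] at h2
    linarith
  constructor
  · rw [Set.eq_empty_iff_forall_notMem]
    rintro γ ⟨hc, hγL⟩
    rw [crossIter, Set.mem_iUnion₂] at hc
    obtain ⟨β, hβN, hγP, n, b, hb, heq⟩ := hc
    set v := β + ∑ i, b i with hv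
    have hγRt : γ ∈ Rt := hPRt hγP
    have hvRt : v ∈ Rt := by
      have : v = w.symm γ := by rw [heq, LinearEquiv.symm_apply_apply]
      rw [this]; exact hw' _ hγRt
    have hvL : v ∈ L := (hwL v).2 (heq ▸ hγL)
    have hβRt : β ∈ Rt := hPRt (hNP hβN)
    -- -β = (-v) + ∑ b i, a sum of n+1 elements of L ∪ invSet
    set a : Fin (n + 1) → V := Fin.cons (-v) b with ha
    have hsum : ∑ i, a i = -β := by
      rw [ha, Fin.sum_cons, hv]; abel
    have hmem : ∀ i, a i ∈ (L ∪ invSet P w) ∩ Rt := by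
      intro i
      refine Fin.cases ?_ ?_ i
      · rw [ha]
        simp only [Fin.cons_zero]
        exact ⟨Or.inl ((hLneg v).1 hvL), hneg _ hvRt⟩
      · intro j
        rw [ha]
        simp only [Fin.cons_succ]
        exact ⟨Or.inr (hb j), hPRt (hinvP (hb j))⟩
    have hnegβRt : -β ∈ Rt := hneg _ hβRt
    have hres : -β ∈ L ∪ invSet P w := by
      rw [← hsum]
      exact sum_mem_convexRoots Rt h0 hcrys _ hLRw n a hmem (hsum ▸ hnegβRt)
    have hβL : β ∈ L := by
      rcases hres with h | h
      · exact (hLneg β).2 h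
      · exact absurd (hinvP h) (hnegNotP β hβN)
    exact (hL hβL).2 hβN
  · rw [Set.eq_empty_iff_forall_notMem]
    rintro γ ⟨⟨⟨v, hvp, heq⟩, hγP⟩, hγL⟩
    have hvL : v ∈ L := (hwL v).2 (heq ▸ hγL)
    rcases hvp with ⟨hvRt, β₀, hβ₀, β₁, hβ₁, c₀, c₁, hc₀, hc₁, hveq⟩ | hvN
    · have hβ₀Rt : β₀ ∈ Rt := hPRt (hNP hβ₀)
      have hkey : (1 / c₀) • (-v) + (c₁ / c₀) • β₁ = -β₀ := by
        rw [hveq]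
        have hc₀' : c₀ ≠ 0 := ne_of_gt hc₀
        rw [smul_neg, smul_add, smul_smul, smul_smul]
        field_simp
        simp
      have hres : -β₀ ∈ L ∪ invSet P w := by
        rw [← hkey]
        exact hLRw _ (Or.inl ((hLneg v).1 hvL)) _ (Or.inr hβ₁) _ _
          (by positivity) (by positivity) (hkey ▸ hneg _ hβ₀Rt)
      have hβ₀L : β₀ ∈ L := by
        rcases hres with h | h
        · exact (hLneg β₀).2 h
        · exact absurd (hinvP h) (hnegNotP β₀ hβ₀)
      exact (hL hβ₀L).2 hβ₀
    · exact (hL hvL).2 hvN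
end

section
/- Let V be a finite free module over a commutative ring, U ⊆ V a direct summand, Π ∈ V ∧ V, U⁰ ⊆ V* the annihilator of U, and Π^#: V* → V the induced map ξ ↦ (ξ ⊗ id)(Π). Then Π^#(U⁰) ⊆ U if and only if Π ∈ U ∧ V; and Π^#(V*) ⊆ U if and only if Π ∈ U ∧ U. -/
open TensorProduct

section Aux

variable {R : Type*} [CommRing R] {V : Type*} [AddCommGroup V] [Module R V]

lemma contr_map_aux {A B : Type*} [AddCommGroup A] [Module R A] [AddCommGroup B] [Module R B]
    (f : A →ₗ[R] V) (g : B →ₗ[R] V) (ξ : Module.Dual R V) (t : A ⊗[R] B) :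
    TensorProduct.lift ((LinearMap.lsmul R V).comp ξ) (TensorProduct.map f g t)
      = g (TensorProduct.lift ((LinearMap.lsmul R B).comp (ξ.comp f)) t) := by
  induction t using TensorProduct.induction_on with
  | zero => simp
  | tmul a b => simp
  | add x y hx hy => simp [hx, hy]

lemma contr_key (ι : Type*) (b : Module.Basis ι R V) (t : V ⊗[R] V) (i j : ι) :
    (Module.Basis.tensorProduct b b).repr t (i, j)
      = b.repr (TensorProduct.lift ((LinearMap.lsmul R V).comp (b.coord i)) t) j := by
  induction t using TensorProduct.induction_on with
  | zero => simp
  | tmul x y => simp [Module.Basis.tensorProduct_repr_tmul_apply, Module.Basis.coord_apply, mul_comm]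
  | add x y hx hy => simp [hx, hy]

lemma contr_inj [Module.Finite R V] [Module.Free R V] (t : V ⊗[R] V)
    (h : ∀ ξ : Module.Dual R V, TensorProduct.lift ((LinearMap.lsmul R V).comp ξ) t = 0) :
    t = 0 := by
  let b := Module.Free.chooseBasis R V
  apply (Module.Basis.tensorProduct b b).repr.injective
  ext ⟨i, j⟩
  rw [map_zero, contr_key _ b t i j, h (b.coord i)]
  simp

lemma map_comm_aux (f g : V →ₗ[R] V) (t : V ⊗[R] V) :
    TensorProduct.map f g (TensorProduct.comm R V V t)
      = TensorProduct.comm R V V (TensorProduct.map g f t) := by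
  induction t using TensorProduct.induction_on with
  | zero => simp
  | tmul x y => simp
  | add x y hx hy => simp [hx, hy]

lemma lift_zero_aux {A B : Type*} [AddCommGroup A] [Module R A] [AddCommGroup B] [Module R B]
    (t : A ⊗[R] B) : TensorProduct.lift (0 : A →ₗ[R] B →ₗ[R] V) t = 0 := by
  induction t using TensorProduct.induction_on with
  | zero => simp
  | tmul a b => simp
  | add x y hx hy => simp [hx, hy]

end Aux

/-- Let `V` be a finite free module over a commutative ring, `U` a direct
summand, and `Π` an antisymmetric 2-tensor with contraction map
`Π^# : ξ ↦ (ξ ⊗ id)(Π)`.  Then `Π^#(U⁰) ⊆ U` iff `Π ∈ U ∧ V` (i.e. `Π` lies in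
`U ⊗ V + V ⊗ U`), and `Π^#(V*) ⊆ U` iff `Π ∈ U ∧ U` (i.e. `Π` lies in `U ⊗ U`). -/
theorem bivector_musical_characterisation {R : Type*} [CommRing R]
    {V : Type*} [AddCommGroup V] [Module R V] [Module.Finite R V] [Module.Free R V]
    (U : Submodule R V) (hU : ∃ W : Submodule R V, IsCompl U W)
    (Pi : TensorProduct R V V)
    (hanti : (TensorProduct.comm R V V) Pi = -Pi) :
    ((∀ ξ : Module.Dual R V, (∀ u ∈ U, ξ u = 0) →
        TensorProduct.lift ((LinearMap.lsmul R V).comp ξ) Pi ∈ U) ↔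
      Pi ∈ LinearMap.range (TensorProduct.map U.subtype (LinearMap.id (R := R) (M := V))) ⊔
          LinearMap.range (TensorProduct.map (LinearMap.id (R := R) (M := V)) U.subtype)) ∧
    ((∀ ξ : Module.Dual R V,
        TensorProduct.lift ((LinearMap.lsmul R V).comp ξ) Pi ∈ U) ↔
      Pi ∈ LinearMap.range (TensorProduct.map U.subtype U.subtype)) := by
  obtain ⟨W, hW⟩ := hU
  set prU := U.projectionOnto W hW with hprU
  set prW := W.projectionOnto U hW.symm with hprW
  set pU : V →ₗ[R] V := U.subtype.comp prU with hpU
  set pW : V →ₗ[R] V := W.subtype.comp prW with hpWdef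
  have hsum : ∀ x : V, pU x + pW x = x := fun x =>
    Submodule.projection_add_projection_eq_self hW x
  have hpWU : ∀ u ∈ U, pW u = 0 := by
    intro u hu
    simp [hpWdef, hprW, Submodule.projectionOnto_apply_of_mem_right hW.symm hu]
  have hpUmem : ∀ x, pU x ∈ U := fun x => (prU x).2
  -- decomposition of any tensor
  have hdecomp : ∀ t : V ⊗[R] V,
      t = TensorProduct.map pU pU t + TensorProduct.map pU pW t
          + TensorProduct.map pW pU t + TensorProduct.map pW pW t := by
    intro t
    induction t using TensorProduct.induction_on with
    | zero => simp
    | tmul x y =>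
        conv_lhs => rw [← hsum x, ← hsum y]
        simp only [TensorProduct.map_tmul, TensorProduct.tmul_add, TensorProduct.add_tmul]
        abel
    | add x y hx hy =>
        simp only [map_add]
        conv_lhs => rw [hx, hy]
        abel
  -- range facts
  have hr1 : ∀ (g : V →ₗ[R] V) (t : V ⊗[R] V), TensorProduct.map pU g t ∈
      LinearMap.range (TensorProduct.map U.subtype (LinearMap.id (R := R) (M := V))) := by
    intro g t
    refine ⟨TensorProduct.map prU g t, ?_⟩
    rw [← LinearMap.comp_apply, ← TensorProduct.map_comp]
    simp [hpU]
  have hr2 : ∀ (f : V →ₗ[R] V) (t : V ⊗[R] V), TensorProduct.map f pU t ∈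
      LinearMap.range (TensorProduct.map (LinearMap.id (R := R) (M := V)) U.subtype) := by
    intro f t
    refine ⟨TensorProduct.map f prU t, ?_⟩
    rw [← LinearMap.comp_apply, ← TensorProduct.map_comp]
    simp [hpU]
  constructor
  · constructor
    · intro H
      have hWW : TensorProduct.map pW pW Pi = 0 := by
        apply contr_inj
        intro η
        rw [contr_map_aux]
        have hξ : ∀ u ∈ U, (η.comp pW) u = 0 := by
          intro u hu; simp [LinearMap.comp_apply, hpWU u hu]
        exact hpWU _ (H (η.comp pW) hξ)
      rw [hdecomp Pi, hWW, add_zero]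
      refine Submodule.add_mem _ (Submodule.add_mem _ ?_ ?_) ?_
      · exact Submodule.mem_sup_left (hr1 pU Pi)
      · exact Submodule.mem_sup_left (hr1 pW Pi)
      · exact Submodule.mem_sup_right (hr2 pW Pi)
    · intro hPi ξ hξ
      obtain ⟨a, ⟨s, hs⟩, b, ⟨u, hu⟩, hab⟩ := Submodule.mem_sup.mp hPi
      rw [← hab, map_add]
      apply Submodule.add_mem
      · rw [← hs, contr_map_aux]
        have : ξ.comp U.subtype = 0 := LinearMap.ext fun v => hξ v v.2
        rw [this, LinearMap.comp_zero, lift_zero_aux]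
        exact U.zero_mem
      · rw [← hu, contr_map_aux]
        exact Submodule.coe_mem _
  · constructor
    · intro H
      have hVW : TensorProduct.map LinearMap.id pW Pi = 0 := by
        apply contr_inj
        intro η
        rw [contr_map_aux]
        simp only [LinearMap.comp_id]
        exact hpWU _ (H η)
      have hcomp : ∀ f : V →ₗ[R] V, TensorProduct.map f pW Pi = 0 := by
        intro f
        have : TensorProduct.map f pW Pi
            = TensorProduct.map f LinearMap.id (TensorProduct.map LinearMap.id pW Pi) := by
          rw [← LinearMap.comp_apply, ← TensorProduct.map_comp]
          simp
        rw [this, hVW, map_zero]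
      have hWU : TensorProduct.map pW pU Pi = 0 := by
        have h1 : TensorProduct.map pW pU ((TensorProduct.comm R V V) Pi)
            = TensorProduct.comm R V V (TensorProduct.map pU pW Pi) := by
          rw [map_comm_aux]
        rw [hanti, map_neg, hcomp pU, map_zero, neg_eq_zero] at h1
        exact h1
      have : Pi = TensorProduct.map pU pU Pi := by
        conv_lhs => rw [hdecomp Pi]
        rw [hcomp pU, hcomp pW, hWU]
        simp
      rw [this]
      refine ⟨TensorProduct.map prU prU Pi, ?_⟩
      rw [← LinearMap.comp_apply, ← TensorProduct.map_comp]
    · rintro ⟨s, hs⟩ ξ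
      rw [← hs, contr_map_aux]
      exact Submodule.coe_mem _
end
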